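/- arXiv:2303.11768 — 6 statements merged into one kernel-verified Lean document; each statement's English description precedes it below -/
import Mathlib

section
/- Let X be a Hausdorff topological space. Then X has the Hurewicz property if and only if player One does not have a winning strategy in the Hurewicz game on X. -/
open Set TopologicalSpace

universe u

/-- A non-trivial open cover: a family of nonempty proper open sets covering `X`. -/
def NTOpenCover (X : Type u) [TopologicalSpace X] (𝒰 : Set (Set X)) : Prop :=
  (∀ U ∈ 𝒰, IsOpen U ∧ U.Nonempty ∧ U ≠ Set.univ) ∧ ⋃₀ 𝒰 = Set.univ

/-- `𝒪_X`, the collection of non-trivial open covers of `X`. -/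
def OX (X : Type u) [TopologicalSpace X] : Set (Set (Set X)) := {𝒰 | NTOpenCover X 𝒰}

/-- The Hurewicz property. -/
def HurewiczProp (X : Type u) [TopologicalSpace X] : Prop :=
  ∀ 𝒰 : ℕ → Set (Set X), (∀ n, 𝒰 n ∈ OX X) →
    ∃ ℱ : ℕ → Set (Set X), (∀ n, ℱ n ⊆ 𝒰 n ∧ (ℱ n).Finite) ∧
      ∀ x : X, ∃ m : ℕ, ∀ n ≥ m, x ∈ ⋃₀ ℱ n

/-- The selection principle `S_fin(𝒜, ℬ)`. -/
def Sfin {α : Type u} (𝒜 ℬ : Set (Set α)) : Prop :=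
  ∀ 𝒰 : ℕ → Set α, (∀ n, 𝒰 n ∈ 𝒜) →
    ∃ ℱ : ℕ → Set α, (∀ n, ℱ n ⊆ 𝒰 n ∧ (ℱ n).Finite) ∧ (⋃ n, ℱ n) ∈ ℬ

/-- The selection principle `S_1(𝒜, ℬ)`. -/
def Sone {α : Type u} (𝒜 ℬ : Set (Set α)) : Prop :=
  ∀ 𝒰 : ℕ → Set α, (∀ n, 𝒰 n ∈ 𝒜) →
    ∃ f : ℕ → α, (∀ n, f n ∈ 𝒰 n) ∧ Set.range f ∈ ℬ

/-- A member `C` of a collection `ℭ` is groupable if there is a finite-to-one map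
`φ : C → ℕ` such that for every infinite `J ⊆ ℕ`, `⋃ {φ⁻¹(n) : n ∈ J} ∈ ℭ`. -/
def Groupable {α : Type u} (ℭ : Set (Set α)) (C : Set α) : Prop :=
  ∃ φ : α → ℕ, (∀ n : ℕ, {x ∈ C | φ x = n}.Finite) ∧
    ∀ J : Set ℕ, J.Infinite → {x ∈ C | φ x ∈ J} ∈ ℭ

/-- `ℭ^gp`, the collection of groupable members of `ℭ`. -/
def groupables {α : Type u} (ℭ : Set (Set α)) : Set (Set α) :=
  {C | C ∈ ℭ ∧ Groupable ℭ C}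

/-- The Menger property. -/
def MengerProp (X : Type u) [TopologicalSpace X] : Prop := Sfin (OX X) (OX X)

/-- The Rothberger property. -/
def RothbergerProp (X : Type u) [TopologicalSpace X] : Prop := Sone (OX X) (OX X)

/-- The Gerlits-Nagy property: Hurewicz and Rothberger. -/
def GerlitsNagyProp (X : Type u) [TopologicalSpace X] : Prop :=
  HurewiczProp X ∧ RothbergerProp X

/-- `𝒪_X(𝒜)`, the collection of `𝒜`-covers of `X`. -/
def ACovers (X : Type u) [TopologicalSpace X] (𝒜 : Set (Set X)) : Set (Set (Set X)) :=
  {𝒰 | 𝒰 ∈ OX X ∧ ∀ A ∈ 𝒜, ∃ U ∈ 𝒰, A ⊆ U}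

/-- `𝒦_X`, the collection of `k`-covers of `X`. -/
def KCovers (X : Type u) [TopologicalSpace X] : Set (Set (Set X)) :=
  {𝒰 | 𝒰 ∈ OX X ∧ ∀ K : Set X, IsCompact K → K.Nonempty → ∃ U ∈ 𝒰, K ⊆ U}

/-- `Ω_X`, the collection of `ω`-covers of `X`. -/
def OmegaCovers (X : Type u) [TopologicalSpace X] : Set (Set (Set X)) :=
  {𝒰 | 𝒰 ∈ OX X ∧ ∀ F : Set X, F.Finite → F.Nonempty → ∃ U ∈ 𝒰, F ⊆ U}

/-- An ideal of closed sets of `X`. -/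
def IdealOfClosedSets (X : Type u) [TopologicalSpace X] (𝒜 : Set (Set X)) : Prop :=
  (∀ A ∈ 𝒜, IsClosed A ∧ A.Nonempty ∧ A ≠ Set.univ) ∧
  (∀ F : Set X, F.Finite → F.Nonempty → F ∈ 𝒜) ∧
  (∀ A B : Set X, A ∈ 𝒜 → B ∈ 𝒜 → A ∪ B ≠ Set.univ → A ∪ B ∈ 𝒜) ∧
  (∀ A ∈ 𝒜, ∀ B : Set X, B ⊆ A → IsClosed B → B.Nonempty → B ∈ 𝒜)

/-- One has a winning strategy in the Hurewicz game on `X`. -/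
def OneWinsHurewicz (X : Type u) [TopologicalSpace X] : Prop :=
  ∃ σ : List (Set (Set X)) → Set (Set X), (∀ s, σ s ∈ OX X) ∧
    ∀ F : ℕ → Set (Set X),
      (∀ n, (F n).Finite ∧ F n ⊆ σ (List.ofFn fun i : Fin n => F i)) →
        ∃ x : X, ∀ m : ℕ, ∃ n ≥ m, x ∉ ⋃₀ F n

/-- One has a winning strategy in `G_fin(𝒜, ℬ)`. -/
def OneWinsGfin {α : Type u} (𝒜 ℬ : Set (Set α)) : Prop :=
  ∃ σ : List (Set α) → Set α, (∀ s, σ s ∈ 𝒜) ∧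
    ∀ F : ℕ → Set α,
      (∀ n, (F n).Finite ∧ F n ⊆ σ (List.ofFn fun i : Fin n => F i)) →
        (⋃ n, F n) ∉ ℬ

/-- One has a winning predetermined strategy in `G_fin(𝒜, ℬ)`. -/
def OneWinsPreGfin {α : Type u} (𝒜 ℬ : Set (Set α)) : Prop :=
  ∃ σ : ℕ → Set α, (∀ n, σ n ∈ 𝒜) ∧
    ∀ F : ℕ → Set α, (∀ n, (F n).Finite ∧ F n ⊆ σ n) → (⋃ n, F n) ∉ ℬ

/-- One has a winning strategy in `G_1(𝒜, ℬ)`. -/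
def OneWinsGone {α : Type u} (𝒜 ℬ : Set (Set α)) : Prop :=
  ∃ σ : List α → Set α, (∀ s, σ s ∈ 𝒜) ∧
    ∀ f : ℕ → α, (∀ n, f n ∈ σ (List.ofFn fun i : Fin n => f i)) → Set.range f ∉ ℬ

/-- One has a winning predetermined strategy in `G_1(𝒜, ℬ)`. -/
def OneWinsPreGone {α : Type u} (𝒜 ℬ : Set (Set α)) : Prop :=
  ∃ σ : ℕ → Set α, (∀ n, σ n ∈ 𝒜) ∧
    ∀ f : ℕ → α, (∀ n, f n ∈ σ n) → Set.range f ∉ ℬ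

/-- The collection `𝒜` of subsets of `X`, viewed as a hyperspace with the Vietoris topology. -/
def Hyper (X : Type u) (𝒜 : Set (Set X)) : Type u := {K : Set X // K ∈ 𝒜}

/-- The Vietoris topology on `Hyper X 𝒜`. -/
instance Hyper.topologicalSpace (X : Type u) [TopologicalSpace X] (𝒜 : Set (Set X)) :
    TopologicalSpace (Hyper X 𝒜) :=
  TopologicalSpace.generateFrom
    {S | ∃ U : Set X, IsOpen U ∧
      (S = {K : Hyper X 𝒜 | K.1 ⊆ U} ∨ S = {K : Hyper X 𝒜 | (K.1 ∩ U).Nonempty})}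

/-- `𝕂(X)`: the nonempty compact subsets of `X` with the Vietoris topology. -/
abbrev HyperK (X : Type u) [TopologicalSpace X] : Type u :=
  Hyper X {K : Set X | IsCompact K ∧ K.Nonempty}

/-- `𝒫_fin(X)`: the nonempty finite subsets of `X` with the Vietoris topology. -/
abbrev PFin (X : Type u) : Type u :=
  Hyper X {F : Set X | F.Finite ∧ F.Nonempty}

/-- `C_p(X)`: continuous real-valued functions with the topology of pointwise convergence
(the subspace topology from the product topology on `X → ℝ`). -/
abbrev Cp (X : Type u) [TopologicalSpace X] : Type u := {f : X → ℝ // Continuous f}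

/-- `C_k(X)`: continuous real-valued functions with the compact-open topology. -/
def Ck (X : Type u) [TopologicalSpace X] : Type u := {f : X → ℝ // Continuous f}

instance Ck.topologicalSpace (X : Type u) [TopologicalSpace X] : TopologicalSpace (Ck X) :=
  TopologicalSpace.generateFrom
    {S | ∃ (K : Set X) (U : Set ℝ), IsCompact K ∧ IsOpen U ∧
      S = {f : Ck X | ∀ x ∈ K, f.1 x ∈ U}}

/-- The constantly zero function in `C_p(X)`. -/
def zeroCp (X : Type u) [TopologicalSpace X] : Cp X := ⟨fun _ => (0 : ℝ), continuous_const⟩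

/-- The constantly zero function in `C_k(X)`. -/
def zeroCk (X : Type u) [TopologicalSpace X] : Ck X := ⟨fun _ => (0 : ℝ), continuous_const⟩

/-- `Ω_{Y,y}`: the sets having `y` in their closure but not containing `y`. -/
def OmegaPt (Y : Type u) [TopologicalSpace Y] (y : Y) : Set (Set Y) :=
  {A | y ∈ closure A ∧ y ∉ A}

/-- Countable fan-tightness. -/
def CountableFanTightness (Y : Type u) [TopologicalSpace Y] : Prop :=
  ∀ y : Y, Sfin (OmegaPt Y y) (OmegaPt Y y)

/-- Countable strong fan-tightness. -/
def CountableStrongFanTightness (Y : Type u) [TopologicalSpace Y] : Prop :=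
  ∀ y : Y, Sone (OmegaPt Y y) (OmegaPt Y y)

/-- The Reznichenko property: every countable member of `Ω_{Y,y}` is groupable. -/
def Reznichenko (Y : Type u) [TopologicalSpace Y] : Prop :=
  ∀ y : Y, ∀ A ∈ OmegaPt Y y, A.Countable → Groupable (OmegaPt Y y) A


section HurewiczGameAux

open Classical

variable {X : Type u} [TopologicalSpace X]

/-- Lindelöf-type lemma: every non-trivial open cover of a Hurewicz space has a countable
subcover, given as an enumeration. -/
lemma hgLindelof (h : HurewiczProp X) (x0 : X)
    {𝒰 : Set (Set X)} (h𝒰 : 𝒰 ∈ OX X) :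
    ∃ e : ℕ → Set X, (∀ n, e n ∈ 𝒰) ∧ (⋃ n, e n) = Set.univ := by
  obtain ⟨ℱ, hℱ, hc⟩ := h (fun _ => 𝒰) (fun _ => h𝒰)
  set C : Set (Set X) := ⋃ n, ℱ n with hC
  have hCc : C.Countable := countable_iUnion fun n => (hℱ n).2.countable
  have hCsub : C ⊆ 𝒰 := iUnion_subset fun n => (hℱ n).1
  have hCcov : ⋃₀ C = Set.univ := by
    apply eq_univ_of_forall
    intro x
    obtain ⟨m, hm⟩ := hc x
    obtain ⟨U, hU, hxU⟩ := hm m le_rfl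
    exact ⟨U, mem_iUnion.2 ⟨m, hU⟩, hxU⟩
  have hCne : C.Nonempty := by
    rcases eq_empty_or_nonempty C with h0 | h0
    · rw [h0, sUnion_empty] at hCcov
      exact absurd (hCcov ▸ mem_univ x0) (by simp [← hCcov])
    · exact h0
  obtain ⟨e, he⟩ := Set.Countable.exists_eq_range hCc hCne
  refine ⟨e, fun n => hCsub (he ▸ mem_range_self n), ?_⟩
  rw [← sUnion_range, ← he, hCcov]

/-- History of Two's moves along a (reversed) node of the game tree for One's strategy `σ`,
where `E` enumerates a countable subcover of each cover. -/
def hgHist (σ : List (Set (Set X)) → Set (Set X))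
    (E : Set (Set X) → ℕ → Set X) : List ℕ → List (Set (Set X))
  | [] => []
  | (k :: r) => hgHist σ E r ++ [E (σ (hgHist σ E r)) '' Set.Iic k]

/-- One's cover at a node. -/
def hgCov (σ : List (Set (Set X)) → Set (Set X))
    (E : Set (Set X) → ℕ → Set X) (r : List ℕ) : Set (Set X) :=
  σ (hgHist σ E r)

/-- The increasing union of the first `k+1` sets of the enumerated subcover at a node. -/
def hgG (σ : List (Set (Set X)) → Set (Set X))
    (E : Set (Set X) → ℕ → Set X) (r : List ℕ) (k : ℕ) : Set X :=
  ⋃ i ∈ Set.Iic k, E (hgCov σ E r) i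

/-- The branch of the game tree determined by the choice function `kk`. -/
def hgBranch (kk : List ℕ → ℕ) : ℕ → List ℕ
  | 0 => []
  | (n+1) => kk (hgBranch kk n) :: hgBranch kk n

lemma hgBranch_length (kk : List ℕ → ℕ) : ∀ n, (hgBranch kk n).length = n
  | 0 => rfl
  | (n+1) => by simp [hgBranch, hgBranch_length kk n]

/-- A finite subfamily of the range of a monotone sequence of sets is contained in one of them. -/
lemma hgBound {α : Type u} (G : ℕ → Set α) (hmono : Monotone G) {S : Set (Set α)}
    (hfin : S.Finite) (hsub : S ⊆ Set.range G) : ∃ k, ⋃₀ S ⊆ G k := by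
  classical
  have hg : ∀ U ∈ S, ∃ k, G k = U := fun U hU => hsub hU
  refine ⟨hfin.toFinset.sup fun U => if h : ∃ k, G k = U then h.choose else 0, ?_⟩
  rintro x ⟨U, hU, hxU⟩
  have h1 : ∃ k, G k = U := hg U hU
  have h2 : (if h : ∃ k, G k = U then h.choose else 0) ≤
      hfin.toFinset.sup fun U => if h : ∃ k, G k = U then h.choose else 0 :=
    Finset.le_sup (f := fun V => if h : ∃ k, G k = V then h.choose else 0)
      (hfin.mem_toFinset.2 hU)
  rw [dif_pos h1] at h2
  apply hmono h2
  rw [h1.choose_spec]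
  exact hxU

end HurewiczGameAux

theorem statement0 {X : Type u} [TopologicalSpace X] [T2Space X] :
    HurewiczProp X ↔ ¬ OneWinsHurewicz X := by
  constructor
  · -- Hurewicz ⇒ One has no winning strategy
    intro h
    rintro ⟨σ, hσ, hwin⟩
    classical
    by_cases hX : Nonempty X
    swap
    · obtain ⟨x, -⟩ := hwin (fun _ => ∅) (fun n => ⟨Set.finite_empty, Set.empty_subset _⟩)
      exact hX ⟨x⟩
    obtain ⟨x0⟩ := hX
    -- enumeration of countable subcovers
    have key : ∀ 𝒰 : Set (Set X), ∃ e : ℕ → Set X,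
        𝒰 ∈ OX X → (∀ n, e n ∈ 𝒰) ∧ (⋃ n, e n) = Set.univ := by
      intro 𝒰
      by_cases h𝒰 : 𝒰 ∈ OX X
      · obtain ⟨e, h1, h2⟩ := hgLindelof h x0 h𝒰
        exact ⟨e, fun _ => ⟨h1, h2⟩⟩
      · exact ⟨fun _ => ∅, fun hh => absurd hh h𝒰⟩
    choose E hE using key
    have hcovOX : ∀ r : List ℕ, hgCov σ E r ∈ OX X := fun r => hσ _
    have hGmono : ∀ r : List ℕ, Monotone (hgG σ E r) := by
      intro r a b hab
      exact biUnion_subset_biUnion_left (Iic_subset_Iic.2 hab)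
    have hGmem : ∀ r k, hgG σ E r k ⊆ Set.univ := fun _ _ => subset_univ _
    have hGopen : ∀ (r : List ℕ) (k : ℕ), IsOpen (hgG σ E r k) := by
      intro r k
      exact isOpen_biUnion fun i _ =>
        ((hcovOX r).1 _ ((hE _ (hcovOX r)).1 i)).1
    have hGne : ∀ (r : List ℕ) (k : ℕ), (hgG σ E r k).Nonempty := by
      intro r k
      obtain ⟨x, hx⟩ := ((hcovOX r).1 _ ((hE _ (hcovOX r)).1 0)).2.1
      exact ⟨x, mem_biUnion (mem_Iic.2 (Nat.zero_le k)) hx⟩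
    have hGcov : ∀ r : List ℕ, ⋃ k, hgG σ E r k = Set.univ := by
      intro r
      apply eq_univ_of_univ_subset
      rw [← (hE _ (hcovOX r)).2]
      exact iUnion_subset fun i =>
        subset_iUnion_of_subset i (subset_biUnion_of_mem (mem_Iic.2 le_rfl))
    -- the sequence of covers indexed by codes of nodes
    set 𝒞 : ℕ → Set (Set X) := fun j =>
      match Encodable.decode (α := List ℕ) j with
      | some r => if ∀ k, hgG σ E r k ≠ Set.univ then Set.range (hgG σ E r) else σ []
      | none => σ [] with h𝒞def
    have hrangeOX : ∀ r : List ℕ, (∀ k, hgG σ E r k ≠ Set.univ) →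
        Set.range (hgG σ E r) ∈ OX X := by
      intro r hbad
      refine ⟨?_, ?_⟩
      · rintro U ⟨k, rfl⟩
        exact ⟨hGopen r k, hGne r k, hbad k⟩
      · rw [sUnion_range, hGcov r]
    have h𝒞OX : ∀ j, 𝒞 j ∈ OX X := by
      intro j
      rw [h𝒞def]
      cases hd : Encodable.decode (α := List ℕ) j with
      | none => simp only [hd]; exact hσ []
      | some r =>
        by_cases hbad : ∀ k, hgG σ E r k ≠ Set.univ
        · simp only [hd, if_pos hbad]
          exact hrangeOX r hbad
        · simp only [hd, if_neg hbad]
          exact hσ []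
    obtain ⟨ℱ, hℱ, hcv⟩ := h 𝒞 h𝒞OX
    -- choice of Two's response at each node
    have kkex : ∀ r : List ℕ, ∃ k,
        (¬ (∀ k', hgG σ E r k' ≠ Set.univ) → hgG σ E r k = Set.univ) ∧
        ((∀ k', hgG σ E r k' ≠ Set.univ) →
          ⋃₀ ℱ (Encodable.encode r) ⊆ hgG σ E r k) := by
      intro r
      by_cases hbad : ∀ k', hgG σ E r k' ≠ Set.univ
      · have hsub : ℱ (Encodable.encode r) ⊆ Set.range (hgG σ E r) := by
          have := (hℱ (Encodable.encode r)).1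
          rw [h𝒞def] at this
          simpa only [Encodable.encodek, if_pos hbad] using this
        obtain ⟨k, hk⟩ := hgBound (hgG σ E r) (hGmono r)
          (hℱ (Encodable.encode r)).2 hsub
        exact ⟨k, fun hc => absurd hbad hc, fun _ => hk⟩
      · push_neg at hbad
        obtain ⟨k, hk⟩ := hbad
        exact ⟨k, fun _ => hk, fun hc => absurd hk (hc k)⟩
    choose kk hkk1 hkk2 using kkex
    -- the defeating play
    have hhist : ∀ n, hgHist σ E (hgBranch kk n) =
        List.ofFn (fun i : Fin n => E (hgCov σ E (hgBranch kk i)) ''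
          Set.Iic (kk (hgBranch kk i))) := by
      intro n
      induction n with
      | zero => rfl
      | succ n ih =>
        rw [List.ofFn_succ']
        show hgHist σ E (hgBranch kk n) ++
          [E (σ (hgHist σ E (hgBranch kk n))) '' Set.Iic (kk (hgBranch kk n))] = _
        rw [ih, List.concat_eq_append]
        congr 1
        rw [← ih]
        simp [Fin.val_last, hgCov]
    have hleg : ∀ n : ℕ,
        (E (hgCov σ E (hgBranch kk n)) '' Set.Iic (kk (hgBranch kk n))).Finite ∧
        E (hgCov σ E (hgBranch kk n)) '' Set.Iic (kk (hgBranch kk n)) ⊆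
          σ (List.ofFn fun i : Fin n => E (hgCov σ E (hgBranch kk i)) ''
            Set.Iic (kk (hgBranch kk i))) := by
      intro n
      constructor
      · exact (Set.finite_Iic _).image _
      · rw [← hhist n]
        rintro U ⟨i, -, rfl⟩
        exact (hE _ (hcovOX (hgBranch kk n))).1 i
    obtain ⟨x, hx⟩ := hwin (fun n => E (hgCov σ E (hgBranch kk n)) ''
        Set.Iic (kk (hgBranch kk n))) hleg
    -- Two in fact wins this play: contradiction
    obtain ⟨m, hm⟩ := hcv x
    have hsU : ∀ n, ⋃₀ (E (hgCov σ E (hgBranch kk n)) '' Set.Iic (kk (hgBranch kk n)))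
        = hgG σ E (hgBranch kk n) (kk (hgBranch kk n)) := by
      intro n
      rw [Set.sUnion_image]
      rfl
    have htinj : Function.Injective fun n => Encodable.encode (hgBranch kk n) := by
      intro a b hab
      have h1 : hgBranch kk a = hgBranch kk b := Encodable.encode_injective hab
      have := congrArg List.length h1
      rwa [hgBranch_length, hgBranch_length] at this
    have hfin : {n | Encodable.encode (hgBranch kk n) < m}.Finite := by
      have : {n | Encodable.encode (hgBranch kk n) < m} =
          (fun n => Encodable.encode (hgBranch kk n)) ⁻¹' Set.Iio m := rfl
      rw [this]
      exact Set.Finite.preimage (Function.Injective.injOn htinj) (Set.finite_Iio m)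
    obtain ⟨M, hM⟩ := hfin.bddAbove
    obtain ⟨n, hnM, hxn⟩ := hx (M + 1)
    apply hxn
    rw [hsU n]
    by_cases hbad : ∀ k', hgG σ E (hgBranch kk n) k' ≠ Set.univ
    · -- bad node: use the Hurewicz selection
      have henc : m ≤ Encodable.encode (hgBranch kk n) := by
        by_contra hlt
        push_neg at hlt
        have : n ≤ M := hM hlt
        omega
      exact hkk2 (hgBranch kk n) hbad (hm _ henc)
    · -- good node: Two's move covers everything
      rw [hkk1 (hgBranch kk n) hbad]
      exact mem_univ x
  · -- One has no winning strategy ⇒ Hurewicz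
    intro hnw 𝒰 h𝒰
    by_contra hcon
    apply hnw
    refine ⟨fun s => 𝒰 s.length, fun s => h𝒰 _, ?_⟩
    intro F hF
    by_contra hx
    push_neg at hx
    apply hcon
    refine ⟨F, fun n => ?_, ?_⟩
    · refine ⟨?_, (hF n).1⟩
      have := (hF n).2
      simpa using this
    · intro x
      obtain ⟨m, hm⟩ := hx x
      exact ⟨m, hm⟩
end

section
/- Let X be a Hausdorff space and 𝒜 an ideal of closed sets of X. For any sequence ⟨𝒰_n : n ∈ ℕ⟩ of 𝒜-covers of X each of which is groupable with respect to 𝒪_X(𝒜), there exists a sequence ⟨𝒱_n : n ∈ ℕ⟩ of 𝒜-covers of X, each groupable with respect to 𝒪_X(𝒜), such that 𝒱_n ⊆ 𝒰_n for every n ∈ ℕ and the family {𝒱_n : n ∈ ℕ} is pairwise disjoint. -/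
open Set TopologicalSpace

universe u

theorem statement1 {X : Type u} [TopologicalSpace X] [T2Space X]
    (𝒜 : Set (Set X)) (h𝒜 : IdealOfClosedSets X 𝒜)
    (𝒰 : ℕ → Set (Set X)) (h𝒰 : ∀ n, 𝒰 n ∈ groupables (ACovers X 𝒜)) :
    ∃ 𝒱 : ℕ → Set (Set X),
      (∀ n, 𝒱 n ∈ groupables (ACovers X 𝒜) ∧ 𝒱 n ⊆ 𝒰 n) ∧
      (∀ m n, m ≠ n → Disjoint (𝒱 m) (𝒱 n)) := by
  classical
  choose φ hfin hinf using fun n => (h𝒰 n).2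
  set P : ℕ → ℕ → Set (Set X) := fun n j => {U | U ∈ 𝒰 n ∧ φ n U = j} with hPdef
  have hPfin : ∀ n j, (P n j).Finite := fun n j => hfin n j
  have exk : ∀ (t : ℕ) (prev : ℕ → ℕ), ∃ j : ℕ,
      (∀ s, s < t → prev s ≠ j) ∧
      ∀ s, s < t → ∀ U, U ∈ P (Nat.unpair t).1 j → U ∉ P (Nat.unpair s).1 (prev s) := by
    intro t prev
    have hF : (⋃ s ∈ Set.Iio t, P (Nat.unpair s).1 (prev s)).Finite :=
      (Set.finite_Iio t).biUnion fun s _ => hPfin _ _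
    have hBad : ((φ (Nat.unpair t).1 '' ⋃ s ∈ Set.Iio t, P (Nat.unpair s).1 (prev s)) ∪
        prev '' Set.Iio t).Finite := (hF.image _).union ((Set.finite_Iio t).image _)
    obtain ⟨j, hj⟩ := hBad.infinite_compl.nonempty
    simp only [Set.mem_compl_iff, Set.mem_union, not_or] at hj
    refine ⟨j, ?_, ?_⟩
    · intro s hs h
      exact hj.2 ⟨s, hs, h⟩
    · intro s hs U hU hU'
      exact hj.1 ⟨U, Set.mem_biUnion hs hU', hU.2⟩
  let pick : ℕ → (ℕ → ℕ) → ℕ := fun t prev => (exk t prev).choose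
  let Fn : ℕ → ℕ → ℕ := fun t =>
    Nat.rec (motive := fun _ => ℕ → ℕ) (fun _ => 0)
      (fun t' prev s => if s = t' then pick t' prev else prev s) t
  let k : ℕ → ℕ := fun t => pick t (Fn t)
  have hcoh : ∀ t s, s < t → Fn t s = k s := by
    intro t
    induction t with
    | zero => intro s hs; omega
    | succ t ih =>
      intro s hs
      show (if s = t then pick t (Fn t) else Fn t s) = k s
      by_cases h : s = t
      · subst h; rw [if_pos rfl]
      · rw [if_neg h]; exact ih s (by omega)
  have hk : ∀ t, (∀ s, s < t → k s ≠ k t) ∧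
      ∀ s, s < t → ∀ U, U ∈ P (Nat.unpair t).1 (k t) → U ∉ P (Nat.unpair s).1 (k s) := by
    intro t
    have h := (exk t (Fn t)).choose_spec
    constructor
    · intro s hs
      rw [← hcoh t s hs]
      exact h.1 s hs
    · intro s hs
      rw [← hcoh t s hs]
      exact h.2 s hs
  have kinj : Function.Injective k := by
    intro a b hab
    by_contra h
    rcases Nat.lt_or_ge a b with hl | hg
    · exact (hk b).1 a hl hab
    · exact (hk a).1 b (by omega) hab.symm
  let J : ℕ → Set ℕ := fun n => k '' {t | (Nat.unpair t).1 = n}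
  have hJinf : ∀ n, (J n).Infinite := by
    intro n
    apply Set.Infinite.image kinj.injOn
    apply Set.infinite_of_injective_forall_mem (f := fun i : ℕ => Nat.pair n i)
    · intro i j h
      exact (Nat.pair_eq_pair.mp h).2
    · intro i
      simp [Nat.unpair_pair]
  let 𝒱 : ℕ → Set (Set X) := fun n => {U | U ∈ 𝒰 n ∧ φ n U ∈ J n}
  have hdisj : ∀ m n, m ≠ n → Disjoint (𝒱 m) (𝒱 n) := by
    intro m n hmn
    rw [Set.disjoint_left]
    rintro U ⟨hUm, hm⟩ ⟨hUn, hn⟩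
    obtain ⟨t, ht, hkt⟩ := hm
    obtain ⟨s, hs, hks⟩ := hn
    have hPt : U ∈ P (Nat.unpair t).1 (k t) := by
      rw [ht]; exact ⟨hUm, hkt.symm⟩
    have hPs : U ∈ P (Nat.unpair s).1 (k s) := by
      rw [hs]; exact ⟨hUn, hks.symm⟩
    have hts : t ≠ s := by
      intro h; subst h
      exact hmn (ht.symm.trans hs)
    rcases Nat.lt_or_ge s t with h | h
    · exact (hk t).2 s h U hPt hPs
    · exact (hk s).2 t (by omega) U hPs hPt
  refine ⟨𝒱, fun n => ⟨⟨hinf n (J n) (hJinf n), ?_⟩, fun U hU => hU.1⟩, hdisj⟩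
  set p : ℕ → Prop := fun j => j ∈ J n with hp
  have hpi : {j | p j}.Infinite := hJinf n
  refine ⟨fun U => Nat.count p (φ n U), ?_, ?_⟩
  · intro m
    apply (hPfin n (Nat.nth p m)).subset
    rintro U ⟨⟨hU1, hU2⟩, hU3⟩
    refine ⟨hU1, ?_⟩
    calc φ n U = Nat.nth p (Nat.count p (φ n U)) := (Nat.nth_count hU2).symm
      _ = Nat.nth p m := congrArg _ hU3
  · intro J' hJ'
    have himg : (Nat.nth p '' J').Infinite := hJ'.image (Nat.nth_injective hpi).injOn
    have heq : {U | U ∈ 𝒱 n ∧ Nat.count p (φ n U) ∈ J'} =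
        {U | U ∈ 𝒰 n ∧ φ n U ∈ Nat.nth p '' J'} := by
      ext U
      constructor
      · rintro ⟨⟨hU1, hU2⟩, hU3⟩
        exact ⟨hU1, ⟨Nat.count p (φ n U), hU3, Nat.nth_count hU2⟩⟩
      · rintro ⟨hU1, j, hj, hje⟩
        refine ⟨⟨hU1, ?_⟩, ?_⟩
        · rw [← hje]
          exact Nat.nth_mem_of_infinite hpi j
        · rw [← hje, Nat.count_nth_of_infinite hpi]
          exact hj
    show {U | U ∈ 𝒱 n ∧ Nat.count p (φ n U) ∈ J'} ∈ ACovers X 𝒜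
    rw [heq]
    exact hinf n _ himg
end

section
/- Let X be a Hausdorff space and 𝒜 an ideal of closed sets of X, and suppose X satisfies S_fin(𝒪_X(𝒜), 𝒪_X(𝒜)^gp). Then for any sequence ⟨𝒰_n : n ∈ ℕ⟩ of 𝒜-covers of X there exists a sequence ⟨ℱ_n : n ∈ ℕ⟩ such that: each ℱ_n is a finite subset of 𝒰_n; the family {ℱ_n : n ∈ ℕ} is pairwise disjoint; and for every A ∈ 𝒜 there is m ∈ ℕ such that for every n ≥ m there exists V ∈ ℱ_n with A ⊆ V. -/
open Set TopologicalSpace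

universe u

section Aux

open Classical

variable {X : Type u} [TopologicalSpace X]

/-- In an `𝒜`-cover selected by `S_fin(𝒪(𝒜), 𝒪(𝒜)^gp)`-rich spaces, every `A ∈ 𝒜` has
infinitely many supersets in any `𝒜`-cover. -/
lemma aux_infinite_supersets {𝒜 : Set (Set X)}
    (hS : Sfin (ACovers X 𝒜) (groupables (ACovers X 𝒜)))
    {𝒰 : Set (Set X)} (h𝒰 : 𝒰 ∈ ACovers X 𝒜) {A : Set X} (hA : A ∈ 𝒜) :
    {U ∈ 𝒰 | A ⊆ U}.Infinite := by
  obtain ⟨ℱ, hsub, hgp⟩ := hS (fun _ => 𝒰) (fun _ => h𝒰)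
  obtain ⟨hcov, φ, hφfin, hφJ⟩ := hgp
  by_contra hfin
  rw [Set.not_infinite] at hfin
  have hJinf : (φ '' {U ∈ 𝒰 | A ⊆ U})ᶜ.Infinite := (hfin.image φ).infinite_compl
  obtain ⟨U, ⟨hUC, hUJ⟩, hAU⟩ := (hφJ _ hJinf).2 A hA
  rw [Set.mem_iUnion] at hUC
  obtain ⟨n, hUn⟩ := hUC
  exact hUJ ⟨U, ⟨(hsub n).1 hUn, hAU⟩, rfl⟩

lemma aux_pigeon {α : Type*} (u : ℕ → α) (k : ℕ)
    (hinj : ∀ s ≤ k, ∀ t ≤ k, u s = u t → s = t)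
    (Q : Set α) (hQ : Q.Finite) (hcard : Q.ncard ≤ k) : ∃ s ≤ k, u s ∉ Q := by
  by_contra h
  push_neg at h
  have himg : u '' Set.Iic k ⊆ Q := by rintro _ ⟨s, hs, rfl⟩; exact h s hs
  have h1 : (u '' Set.Iic k).ncard = k + 1 := by
    have hinjOn : Set.InjOn u (Set.Iic k) := fun s hs t ht => hinj s hs t ht
    rw [Set.ncard_image_of_injOn hinjOn, ← Finset.coe_Iic, Set.ncard_coe_finset,
      Nat.card_Iic]
  have := Set.ncard_le_ncard himg hQ
  omega

lemma aux_cofinite_bound {S : Set ℕ} (h : S.Finite) : ∃ B, ∀ j ≥ B, j ∉ S := by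
  obtain ⟨B, hB⟩ := h.bddAbove
  exact ⟨B + 1, fun j hj hjS => by have := hB hjS; omega⟩

/-- The big intersection of an `(n+1) × (n+1)` array of sets. -/
def bigW (u : ℕ → ℕ → Set X) (n : ℕ) : Set X :=
  ⋂ i ∈ Finset.range (n + 1), ⋂ s ∈ Finset.range (n + 1), u i s

lemma bigW_subset (u : ℕ → ℕ → Set X) {n i s : ℕ} (hi : i ≤ n) (hs : s ≤ n) :
    bigW u n ⊆ u i s := by
  intro x hx
  simp only [bigW, Set.mem_iInter] at hx
  exact hx i (Finset.mem_range.2 (by omega)) s (Finset.mem_range.2 (by omega))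

lemma subset_bigW {u : ℕ → ℕ → Set X} {n : ℕ} {A : Set X}
    (h : ∀ i ≤ n, ∀ s ≤ n, A ⊆ u i s) : A ⊆ bigW u n := by
  intro x hx
  simp only [bigW, Set.mem_iInter]
  intro i hi s hs
  exact h i (Nat.lt_succ_iff.mp (Finset.mem_range.1 hi)) s
    (Nat.lt_succ_iff.mp (Finset.mem_range.1 hs)) hx

/-- The auxiliary covers by `(n+1)×(n+1)`-fold intersections, with distinct sets at
each level. -/
def WCov (𝒰 : ℕ → Set (Set X)) (n : ℕ) : Set (Set X) :=
  {W | W.Nonempty ∧ ∃ u : ℕ → ℕ → Set X, (∀ i s, u i s ∈ 𝒰 i) ∧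
      (∀ i, ∀ s ≤ n, ∀ t ≤ n, u i s = u i t → s = t) ∧ W = bigW u n}

lemma WCov_mem_ACovers {𝒜 : Set (Set X)} (h𝒜 : IdealOfClosedSets X 𝒜)
    (hS : Sfin (ACovers X 𝒜) (groupables (ACovers X 𝒜)))
    {𝒰 : ℕ → Set (Set X)} (h𝒰 : ∀ i, 𝒰 i ∈ ACovers X 𝒜) (n : ℕ) :
    WCov 𝒰 n ∈ ACovers X 𝒜 := by
  have hsup : ∀ A ∈ 𝒜, ∃ W ∈ WCov 𝒰 n, A ⊆ W := by
    intro A hA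
    have hinf : ∀ i, {U ∈ 𝒰 i | A ⊆ U}.Infinite :=
      fun i => aux_infinite_supersets hS (h𝒰 i) hA
    let u : ℕ → ℕ → Set X := fun i s => (Set.Infinite.natEmbedding _ (hinf i) s : Set X)
    have humem : ∀ i s, u i s ∈ 𝒰 i ∧ A ⊆ u i s :=
      fun i s => (Set.Infinite.natEmbedding _ (hinf i) s).2
    have hAW : A ⊆ bigW u n := subset_bigW fun i _ s _ => (humem i s).2
    refine ⟨bigW u n, ⟨?_, u, fun i s => (humem i s).1, ?_, rfl⟩, hAW⟩
    · exact ((h𝒜.1 A hA).2.1).mono hAW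
    · intro i s _ t _ hst
      exact (Set.Infinite.natEmbedding _ (hinf i)).injective (Subtype.ext hst)
  refine ⟨⟨?_, ?_⟩, hsup⟩
  · intro W hW
    obtain ⟨hne, u, humem, _, rfl⟩ := hW
    refine ⟨?_, hne, ?_⟩
    · apply isOpen_biInter_finset
      intro i _
      apply isOpen_biInter_finset
      intro s _
      exact ((h𝒰 i).1.1 _ (humem i s)).1
    · intro hcon
      have h00 : bigW u n ⊆ u 0 0 := bigW_subset u (Nat.zero_le n) (Nat.zero_le n)
      rw [hcon, Set.univ_subset_iff] at h00
      exact ((h𝒰 0).1.1 _ (humem 0 0)).2.2 h00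
  · rw [Set.eq_univ_iff_forall]
    intro x
    obtain ⟨W, hW, hxW⟩ := hsup {x} (h𝒜.2.1 {x} (Set.finite_singleton x)
      (Set.singleton_nonempty x))
    exact ⟨W, hW, hxW rfl⟩

end Aux

theorem statement2 {X : Type u} [TopologicalSpace X] [T2Space X]
    (𝒜 : Set (Set X)) (h𝒜 : IdealOfClosedSets X 𝒜)
    (hS : Sfin (ACovers X 𝒜) (groupables (ACovers X 𝒜)))
    (𝒰 : ℕ → Set (Set X)) (h𝒰 : ∀ n, 𝒰 n ∈ ACovers X 𝒜) :
    ∃ ℱ : ℕ → Set (Set X),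
      (∀ n, ℱ n ⊆ 𝒰 n ∧ (ℱ n).Finite) ∧
      (∀ m n, m ≠ n → Disjoint (ℱ m) (ℱ n)) ∧
      (∀ A ∈ 𝒜, ∃ m : ℕ, ∀ n ≥ m, ∃ V ∈ ℱ n, A ⊆ V) := by
  classical
  have hWA : ∀ n, WCov 𝒰 n ∈ ACovers X 𝒜 := WCov_mem_ACovers h𝒜 hS h𝒰
  obtain ⟨𝒢, h𝒢, hgp⟩ := hS (WCov 𝒰) hWA
  obtain ⟨hCcov, φ, hφfin, hφJ⟩ := hgp
  set C : Set (Set X) := ⋃ n, 𝒢 n with hCdef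
  -- a level function: `W ∈ 𝒢 (kf W)` for `W ∈ C`
  have hkfex : ∀ W : Set X, ∃ m, W ∈ C → W ∈ 𝒢 m := by
    intro W
    by_cases hW : W ∈ C
    · rw [hCdef, Set.mem_iUnion] at hW
      obtain ⟨m, hm⟩ := hW
      exact ⟨m, fun _ => hm⟩
    · exact ⟨0, fun h => absurd h hW⟩
  choose kf hkf using hkfex
  -- representations of members of `C` as big intersections
  have hurepex : ∀ W : Set X, ∃ u : ℕ → ℕ → Set X, W ∈ C →
      (∀ i s, u i s ∈ 𝒰 i) ∧
      (∀ i, ∀ s ≤ kf W, ∀ t ≤ kf W, u i s = u i t → s = t) ∧ W = bigW u (kf W) := by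
    intro W
    by_cases hW : W ∈ C
    · obtain ⟨-, u, h1, h2, h3⟩ := (h𝒢 (kf W)).1 (hkf W hW)
      exact ⟨u, fun _ => ⟨h1, h2, h3⟩⟩
    · exact ⟨fun _ _ => ∅, fun h => absurd h hW⟩
  choose urep hurep using hurepex
  -- only finitely many members of `C` have small level
  have hksmall : ∀ N : ℕ, {W | W ∈ C ∧ kf W ≤ N}.Finite := by
    intro N
    refine Set.Finite.subset (Set.Finite.biUnion (Set.finite_Iic N)
      fun m _ => (h𝒢 m).2) ?_
    rintro W ⟨hWC, hk⟩
    exact Set.mem_biUnion hk (hkf W hWC)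
  -- all possible components of members of the group `jj`
  set comps : ℕ → Set (Set X) := fun jj =>
    ⋃ W ∈ {W | W ∈ C ∧ φ W = jj},
      (fun p : ℕ × ℕ => urep W p.1 p.2) '' (Set.Iic (kf W) ×ˢ Set.Iic (kf W))
    with hcompsdef
  have hcompsfin : ∀ jj, (comps jj).Finite := by
    intro jj
    exact Set.Finite.biUnion (hφfin jj)
      fun W _ => ((Set.finite_Iic _).prod (Set.finite_Iic _)).image _
  -- picking groups of high level
  have hpickex : ∀ (n lb : ℕ) (Q : Set (Set X)), ∃ jj : ℕ, lb < jj ∧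
      ∀ W ∈ C, φ W = jj → n ≤ kf W ∧ Q.ncard ≤ kf W := by
    intro n lb Q
    obtain ⟨B, hB⟩ := ((hksmall (max n Q.ncard)).image φ).bddAbove
    refine ⟨max lb B + 1, by omega, ?_⟩
    intro W hWC hφW
    suffices h : max n Q.ncard ≤ kf W by
      exact ⟨le_trans (le_max_left _ _) h, le_trans (le_max_right _ _) h⟩
    by_contra hlt
    push_neg at hlt
    have hmem : φ W ∈ φ '' {W | W ∈ C ∧ kf W ≤ max n Q.ncard} :=
      ⟨W, ⟨hWC, hlt.le⟩, rfl⟩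
    have := hB hmem
    omega
  choose pick hpicklt hpickk using hpickex
  -- the recursion choosing the group indices and used components
  let g : ℕ → ℕ × Set (Set X) := fun n =>
    Nat.rec (⟨pick 0 0 ∅, ∅⟩)
      (fun m ih => ⟨pick (m + 1) ih.1 (ih.2 ∪ comps ih.1), ih.2 ∪ comps ih.1⟩) n
  let j : ℕ → ℕ := fun n => (g n).1
  let Q : ℕ → Set (Set X) := fun n => (g n).2
  have hQ0 : Q 0 = ∅ := rfl
  have hQsucc : ∀ n, Q (n + 1) = Q n ∪ comps (j n) := fun n => rfl
  have hj0 : j 0 = pick 0 0 ∅ := rfl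
  have hjsucc : ∀ n, j (n + 1) = pick (n + 1) (j n) (Q (n + 1)) := fun n => rfl
  have hjlt : ∀ n, j n < j (n + 1) := by
    intro n
    rw [hjsucc]
    exact hpicklt (n + 1) (j n) (Q (n + 1))
  have hjmono : StrictMono j := strictMono_nat_of_lt_succ hjlt
  have hpickprop : ∀ n, ∀ W ∈ C, φ W = j n → n ≤ kf W ∧ (Q n).ncard ≤ kf W := by
    intro n
    cases n with
    | zero =>
      intro W hWC hφW
      rw [hj0] at hφW
      have := hpickk 0 0 ∅ W hWC hφW
      rwa [hQ0]
    | succ m =>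
      intro W hWC hφW
      rw [hjsucc] at hφW
      exact hpickk (m + 1) (j m) (Q (m + 1)) W hWC hφW
  have hQfin : ∀ n, (Q n).Finite := by
    intro n
    induction n with
    | zero => rw [hQ0]; exact Set.finite_empty
    | succ m ih => rw [hQsucc]; exact ih.union (hcompsfin _)
  have hQmono : Monotone Q :=
    monotone_nat_of_le_succ fun n => by rw [hQsucc]; exact Set.subset_union_left
  have hcompsQ : ∀ m n, m < n → comps (j m) ⊆ Q n := by
    intro m n hmn
    have h1 : comps (j m) ⊆ Q (m + 1) := by
      rw [hQsucc]; exact Set.subset_union_right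
    exact h1.trans (hQmono hmn)
  -- a fresh component exists for each member of the `n`-th chosen group
  have hfresh : ∀ (n : ℕ) (W : Set X), ∃ V : Set X, W ∈ C ∧ φ W = j n →
      (∃ s ≤ kf W, V = urep W n s) ∧ W ⊆ V ∧ V ∉ Q n := by
    intro n W
    by_cases hW : W ∈ C ∧ φ W = j n
    · obtain ⟨hWC, hφW⟩ := hW
      obtain ⟨hn, hcard⟩ := hpickprop n W hWC hφW
      obtain ⟨humem, hinj, hWeq⟩ := hurep W hWC
      obtain ⟨s, hs, hnotin⟩ := aux_pigeon (fun s => urep W n s) (kf W) (hinj n)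
        (Q n) (hQfin n) hcard
      refine ⟨urep W n s, fun _ => ⟨⟨s, hs, rfl⟩, ?_, hnotin⟩⟩
      calc W = bigW (urep W) (kf W) := hWeq
        _ ⊆ urep W n s := bigW_subset _ hn hs
    · exact ⟨∅, fun h => absurd h hW⟩
  choose pickV hpickV using hfresh
  refine ⟨fun n => (pickV n) '' {W | W ∈ C ∧ φ W = j n}, ?_, ?_, ?_⟩
  · intro n
    constructor
    · rintro V ⟨W, ⟨hWC, hφW⟩, rfl⟩
      obtain ⟨⟨s, hs, hV⟩, -, -⟩ := hpickV n W ⟨hWC, hφW⟩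
      rw [hV]
      exact (hurep W hWC).1 n s
    · exact (hφfin (j n)).image _
  · have hsubcomps : ∀ n, (pickV n) '' {W | W ∈ C ∧ φ W = j n} ⊆ comps (j n) := by
      rintro n V ⟨W, ⟨hWC, hφW⟩, rfl⟩
      obtain ⟨⟨s, hs, hV⟩, -, -⟩ := hpickV n W ⟨hWC, hφW⟩
      have hn : n ≤ kf W := (hpickprop n W hWC hφW).1
      exact Set.mem_biUnion (show W ∈ {W | W ∈ C ∧ φ W = j n} from ⟨hWC, hφW⟩)
        ⟨(n, s), ⟨hn, hs⟩, hV.symm⟩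
    have hdisj : ∀ m n, m < n → Disjoint ((pickV m) '' {W | W ∈ C ∧ φ W = j m})
        ((pickV n) '' {W | W ∈ C ∧ φ W = j n}) := by
      intro m n hmn
      rw [Set.disjoint_left]
      rintro V hVm ⟨W, ⟨hWC, hφW⟩, rfl⟩
      exact (hpickV n W ⟨hWC, hφW⟩).2.2 (hcompsQ m n hmn (hsubcomps m hVm))
    intro m n hmn
    rcases hmn.lt_or_gt with h | h
    · exact hdisj m n h
    · exact (hdisj n m h).symm
  · intro A hA
    have hbad : {jj : ℕ | ¬∃ W, W ∈ C ∧ φ W = jj ∧ A ⊆ W}.Finite := by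
      by_contra hinf
      rw [← Set.not_infinite, not_not] at hinf
      obtain ⟨W, ⟨hWC, hWJ⟩, hAW⟩ := (hφJ _ hinf).2 A hA
      exact hWJ ⟨W, hWC, rfl, hAW⟩
    obtain ⟨B, hB⟩ := aux_cofinite_bound hbad
    refine ⟨B, fun n hn => ?_⟩
    have hjn : j n ∉ {jj : ℕ | ¬∃ W, W ∈ C ∧ φ W = jj ∧ A ⊆ W} :=
      hB (j n) (le_trans hn hjmono.le_apply)
    rw [Set.mem_setOf_eq, not_not] at hjn
    obtain ⟨W, hWC, hφW, hAW⟩ := hjn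
    exact ⟨pickV n W, ⟨W, ⟨hWC, hφW⟩, rfl⟩,
      hAW.trans (hpickV n W ⟨hWC, hφW⟩).2.1⟩
end

section
/- Let X be a Hausdorff space, let 𝒜 be an ideal of closed sets of X consisting of compact sets, let 𝔸(X) denote 𝒜 regarded as a subspace of 𝕂(X), and let ℬ be an ideal of closed sets of 𝔸(X) consisting of compact sets. For U open in X write [U] = {K ∈ 𝔸(X) : K ⊆ U}. Assume: (S1) for every K₀ ∈ 𝒜 the set {K ∈ 𝔸(X) : K ⊆ K₀} belongs to ℬ, and for every 𝐊 ∈ ℬ the union ⋃𝐊 belongs to 𝒜; (S2) for every 𝒜-cover 𝒰 of X, {[U] : U ∈ 𝒰} is a ℬ-cover of 𝔸(X); (S3) for every ℬ-cover 𝒰 of 𝔸(X), the family {V : V a nonempty proper open subset of X with [V] ⊆ U for some U ∈ 𝒰} is an 𝒜-cover of X; (S4) if X satisfies S_fin(𝒪_X(𝒜), 𝒪_X(𝒜)^gp) then X has the Hurewicz property, and if 𝔸(X) satisfies S_fin(𝒪_{𝔸(X)}(ℬ), 𝒪_{𝔸(X)}(ℬ)^gp) then 𝔸(X) has the Hurewicz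 property; (S5) the following are equivalent: 𝔸(X) is Menger; 𝔸(X) satisfies S_fin(𝒪_{𝔸(X)}(ℬ), 𝒪_{𝔸(X)}(ℬ)); X satisfies S_fin(𝒪_X(𝒜), 𝒪_X(𝒜)). Then the following are equivalent: (i) 𝔸(X) has the Hurewicz property; (ii) 𝔸(X) satisfies S_fin(𝒪_{𝔸(X)}(ℬ), 𝒪_{𝔸(X)}(ℬ)^gp); (iii) X satisfies S_fin(𝒪_X(𝒜), 𝒪_X(𝒜)^gp); (iv) X satisfies S_fin(𝒪_X(𝒜), 𝒪_X(𝒜)) and the groupable 𝒜-covers of X are exactly the countable 𝒜-covers of X. -/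
open Set TopologicalSpace

universe u

section AuxST3

universe v

variable {Z : Type v}

lemma grp_countable3 {ℭ : Set (Set Z)} {C : Set Z} (h : Groupable ℭ C) : C.Countable := by
  obtain ⟨φ, hfib, -⟩ := h
  have hsub : C ⊆ ⋃ n, {x ∈ C | φ x = n} := fun x hx => Set.mem_iUnion.2 ⟨φ x, hx, rfl⟩
  exact (Set.countable_iUnion fun n => (hfib n).countable).mono hsub

lemma exists_enum3 {s : Set Z} (hc : s.Countable) (hi : s.Infinite) :
    ∃ e : ℕ → Z, Function.Injective e ∧ Set.range e = s := by
  have h1 : Countable ↥s := hc.to_subtype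
  have h2 : Infinite ↥s := hi.to_subtype
  obtain ⟨f⟩ : Nonempty (ℕ ≃ ↥s) := nonempty_equiv_of_countable
  refine ⟨fun n => (f n : Z), fun a b hab => f.injective (Subtype.val_injective hab), ?_⟩
  ext x
  constructor
  · rintro ⟨n, rfl⟩; exact (f n).2
  · intro hx; exact ⟨f.symm ⟨x, hx⟩, by simp⟩

lemma menger_of_hurewicz3 [TopologicalSpace Z] (h : HurewiczProp Z) : MengerProp Z := by
  intro 𝒰 h𝒰
  obtain ⟨ℱ, hℱ, hev⟩ := h 𝒰 h𝒰
  refine ⟨ℱ, hℱ, ⟨fun U hU => ?_, ?_⟩⟩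
  · obtain ⟨n, hn⟩ := Set.mem_iUnion.mp hU
    exact (h𝒰 n).1 U ((hℱ n).1 hn)
  · apply Set.eq_univ_of_forall
    intro x
    obtain ⟨m, hm⟩ := hev x
    obtain ⟨U, hU, hxU⟩ := Set.mem_sUnion.mp (hm m le_rfl)
    exact Set.mem_sUnion.mpr ⟨U, Set.mem_iUnion.mpr ⟨m, hU⟩, hxU⟩

lemma cover_infinite3 [TopologicalSpace Z] (𝒞 : Set (Set Z))
    (hfin : ∀ F : Set Z, F.Finite → F.Nonempty → F ∈ 𝒞)
    (z₀ : Z) {𝒰 : Set (Set Z)} (h𝒰 : 𝒰 ∈ ACovers Z 𝒞) : 𝒰.Infinite := by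
  by_contra hcon
  rw [Set.not_infinite] at hcon
  have hfinU := hcon
  have hch : ∀ U : ↥𝒰, ∃ z, z ∉ (U : Set Z) :=
    fun U => (Set.ne_univ_iff_exists_notMem _).1 (h𝒰.1.1 U U.2).2.2
  choose zf hzf using hch
  have : Finite ↥𝒰 := hfinU.to_subtype
  have hF : (insert z₀ (Set.range zf)).Finite := (Set.finite_range zf).insert z₀
  obtain ⟨U₀, hU₀, hsub⟩ :=
    h𝒰.2 _ (hfin _ hF ⟨z₀, Set.mem_insert _ _⟩)
  exact hzf ⟨U₀, hU₀⟩ (hsub (Set.mem_insert_of_mem _ ⟨⟨U₀, hU₀⟩, rfl⟩))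

lemma tail_cover3 [TopologicalSpace Z] (𝒞 : Set (Set Z))
    (hfin : ∀ F : Set Z, F.Finite → F.Nonempty → F ∈ 𝒞)
    (hun : ∀ A B : Set Z, A ∈ 𝒞 → B ∈ 𝒞 → A ∪ B ≠ Set.univ → A ∪ B ∈ 𝒞)
    (hne : ∀ A ∈ 𝒞, ∀ F : Set Z, F.Finite → A ∪ F ≠ Set.univ)
    {𝒰 : Set (Set Z)} (h𝒰 : 𝒰 ∈ ACovers Z 𝒞)
    {𝒮 : Set (Set Z)} (h𝒮 : 𝒮.Finite) (h𝒮𝒰 : 𝒮 ⊆ 𝒰) :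
    𝒰 \ 𝒮 ∈ ACovers Z 𝒞 := by
  classical
  have hch : ∀ U : ↥𝒮, ∃ z, z ∉ (U : Set Z) :=
    fun U => (Set.ne_univ_iff_exists_notMem _).1 (h𝒰.1.1 U (h𝒮𝒰 U.2)).2.2
  choose zf hzf using hch
  have : Finite ↥𝒮 := h𝒮.to_subtype
  have hFfin : (Set.range zf).Finite := Set.finite_range zf
  have key : ∀ A ∈ 𝒞, ∃ U ∈ 𝒰 \ 𝒮, A ⊆ U := by
    intro A hA
    have hA' : A ∪ Set.range zf ∈ 𝒞 := by
      rcases (Set.range zf).eq_empty_or_nonempty with hemp | hne'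
      · rw [hemp, Set.union_empty]; exact hA
      · exact hun A _ hA (hfin _ hFfin hne') (hne A hA _ hFfin)
    obtain ⟨U₀, hU₀, hsub⟩ := h𝒰.2 _ hA'
    refine ⟨U₀, ⟨hU₀, fun hmem => ?_⟩, fun z hz => hsub (Or.inl hz)⟩
    exact hzf ⟨U₀, hmem⟩ (hsub (Or.inr ⟨⟨U₀, hmem⟩, rfl⟩))
  refine ⟨⟨fun U hU => h𝒰.1.1 U hU.1, ?_⟩, key⟩
  apply Set.eq_univ_of_forall
  intro z
  obtain ⟨U, hU, hsub⟩ := key {z} (hfin _ (Set.finite_singleton z) ⟨z, rfl⟩)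
  exact Set.mem_sUnion.mpr ⟨U, hU, hsub rfl⟩

lemma block_groupable3 [TopologicalSpace Z] (𝒞 : Set (Set Z))
    (hsing : ∀ z : Z, ({z} : Set Z) ∈ 𝒞)
    {G : Set (Set Z)} (hG : G ∈ ACovers Z 𝒞)
    {e : ℕ → Set Z} (he : Function.Injective e) (hre : Set.range e = G)
    {t : ℕ → ℕ} (ht : StrictMono t) (ht0 : t 0 = 0)
    (H : ∀ B ∈ 𝒞, ∃ s₀, ∀ s ≥ s₀, ∃ k, t s ≤ k ∧ k < t (s + 1) ∧ B ⊆ e k) :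
    Groupable (ACovers Z 𝒞) G := by
  classical
  set sOf : ℕ → ℕ := fun k => Nat.findGreatest (fun s => t s ≤ k) k with hsOfdef
  have f1 : ∀ k, t (sOf k) ≤ k := by
    intro k
    have h0 : (fun s => t s ≤ k) 0 := by simp only []; rw [ht0]; exact Nat.zero_le k
    exact Nat.findGreatest_spec (P := fun s => t s ≤ k) (Nat.zero_le k) h0
  have f2 : ∀ k, k < t (sOf k + 1) := by
    intro k
    by_contra hcon
    push_neg at hcon
    exact Nat.findGreatest_is_greatest (P := fun s => t s ≤ k) (Nat.lt_succ_self _)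
      (le_trans ht.le_apply hcon) hcon
  have f3 : ∀ s k, t s ≤ k → k < t (s + 1) → sOf k = s := by
    intro s k h1 h2
    rcases lt_trichotomy (sOf k) s with h | h | h
    · have : k < t s := lt_of_lt_of_le (f2 k) (ht.monotone (by omega))
      omega
    · exact h
    · have : t (s + 1) ≤ k := le_trans (ht.monotone (by omega)) (f1 k)
      omega
  set ψ : Set Z → ℕ := fun W => sOf (Function.invFun e W) with hψdef
  have hinv : ∀ k, Function.invFun e (e k) = k := fun k => Function.leftInverse_invFun he k
  have hψe : ∀ k, ψ (e k) = sOf k := fun k => by simp only [hψdef, hinv k]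
  have key : ∀ B ∈ 𝒞, ∀ J : Set ℕ, J.Infinite → ∃ U ∈ G, ψ U ∈ J ∧ B ⊆ U := by
    intro B hB J hJ
    obtain ⟨s₀, hs₀⟩ := H B hB
    obtain ⟨s, hsJ, hss⟩ : ∃ s ∈ J, s₀ ≤ s := by
      by_contra hcon
      push_neg at hcon
      exact hJ ((Set.finite_Iio s₀).subset fun s hs => hcon s hs)
    obtain ⟨k, hk1, hk2, hk3⟩ := hs₀ s hss
    refine ⟨e k, by rw [← hre]; exact ⟨k, rfl⟩, ?_, hk3⟩
    rw [hψe k, f3 s k hk1 hk2]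
    exact hsJ
  refine ⟨ψ, ?_, ?_⟩
  · intro n
    have hsub : {x ∈ G | ψ x = n} ⊆ e '' Set.Iio (t (n + 1)) := by
      rintro x ⟨hxG, hxn⟩
      rw [← hre] at hxG
      obtain ⟨k, rfl⟩ := hxG
      refine ⟨k, ?_, rfl⟩
      have hk : sOf k = n := by rw [← hψe k]; exact hxn
      simpa [Set.mem_Iio, ← hk] using f2 k
    exact ((Set.finite_Iio _).image e).subset hsub
  · intro J hJ
    refine ⟨⟨fun U hU => hG.1.1 U hU.1, ?_⟩, fun B hB => ?_⟩
    · apply Set.eq_univ_of_forall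
      intro z
      obtain ⟨U, hUG, hUJ, hzU⟩ := key {z} (hsing z) J hJ
      exact Set.mem_sUnion.mpr ⟨U, ⟨hUG, hUJ⟩, hzU rfl⟩
    · obtain ⟨U, hUG, hUJ, hBU⟩ := key B hB J hJ
      exact ⟨U, ⟨hUG, hUJ⟩, hBU⟩

end AuxST3

section MainAux

variable {X : Type u} [TopologicalSpace X]

lemma countable_acover_groupable3
    (𝒜 : Set (Set X)) (ℬ : Set (Set (Hyper X 𝒜)))
    (hAfin : ∀ F : Set X, F.Finite → F.Nonempty → F ∈ 𝒜)
    (hAun : ∀ A B : Set X, A ∈ 𝒜 → B ∈ 𝒜 → A ∪ B ≠ Set.univ → A ∪ B ∈ 𝒜)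
    (hneA : ∀ A ∈ 𝒜, ∀ F : Set X, F.Finite → A ∪ F ≠ Set.univ)
    (hS2 : ∀ 𝒰 ∈ ACovers X 𝒜,
      ((fun U => {K : Hyper X 𝒜 | K.1 ⊆ U}) '' 𝒰) ∈ ACovers (Hyper X 𝒜) ℬ)
    (h1 : HurewiczProp (Hyper X 𝒜))
    (x₀ : X)
    {𝒰 : Set (Set X)} (hC : 𝒰 ∈ ACovers X 𝒜) (hcnt : 𝒰.Countable) :
    Groupable (ACovers X 𝒜) 𝒰 := by
  classical
  have hsingA : ∀ x : X, ({x} : Set X) ∈ 𝒜 :=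
    fun x => hAfin _ (Set.finite_singleton x) ⟨x, rfl⟩
  set br : Set X → Set (Hyper X 𝒜) := fun U => {K : Hyper X 𝒜 | K.1 ⊆ U} with hbrdef
  have hbrinj : Function.Injective br := by
    intro U V h
    ext x
    constructor
    · intro hx
      have hmem : (⟨{x}, hsingA x⟩ : Hyper X 𝒜) ∈ br U := Set.singleton_subset_iff.mpr hx
      rw [h] at hmem
      exact Set.singleton_subset_iff.mp hmem
    · intro hx
      have hmem : (⟨{x}, hsingA x⟩ : Hyper X 𝒜) ∈ br V := Set.singleton_subset_iff.mpr hx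
      rw [← h] at hmem
      exact Set.singleton_subset_iff.mp hmem
  have hinf : 𝒰.Infinite := cover_infinite3 𝒜 hAfin x₀ hC
  obtain ⟨e, he, hre⟩ := exists_enum3 hcnt hinf
  have htail : ∀ n : ℕ, 𝒰 \ (e '' Set.Iio n) ∈ ACovers X 𝒜 := fun n =>
    tail_cover3 𝒜 hAfin hAun hneA hC ((Set.finite_Iio n).image e)
      (by rw [← hre]; exact Set.image_subset_range e _)
  obtain ⟨Ghat, hGhat, hev⟩ := h1 (fun n => br '' (𝒰 \ (e '' Set.Iio n)))
    (fun n => (hS2 _ (htail n)).1)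
  set I : ℕ → Set ℕ := fun n => {k | e k ∈ 𝒰 \ (e '' Set.Iio n) ∧ br (e k) ∈ Ghat n} with hIdef
  have hIfin : ∀ n, (I n).Finite := by
    intro n
    have hsub : I n ⊆ (fun k => br (e k)) ⁻¹' (Ghat n) := fun k hk => hk.2
    exact (Set.Finite.preimage (hbrinj.comp he).injOn (hGhat n).2).subset hsub
  have hIbdd : ∀ n, ∃ M, ∀ k ∈ I n, k ≤ M := by
    intro n
    rcases (hIfin n).bddAbove with ⟨M, hM⟩
    exact ⟨M, fun k hk => hM hk⟩
  choose Mf hMf using hIbdd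
  set t : ℕ → ℕ := fun s => Nat.rec 0 (fun _ ts => max (ts + 1) (Mf ts + 1)) s with htdef
  have ht0 : t 0 = 0 := rfl
  have htsucc : ∀ s, t (s + 1) = max (t s + 1) (Mf (t s) + 1) := fun s => rfl
  have ht : StrictMono t := strictMono_nat_of_lt_succ fun s => by rw [htsucc s]; omega
  have H : ∀ A ∈ 𝒜, ∃ s₀, ∀ s ≥ s₀, ∃ k, t s ≤ k ∧ k < t (s + 1) ∧ A ⊆ e k := by
    intro A hA
    obtain ⟨m, hm⟩ := hev ⟨A, hA⟩
    refine ⟨m, fun s hs => ?_⟩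
    have hmts : m ≤ t s := le_trans hs ht.le_apply
    obtain ⟨S, hS, hKS⟩ := Set.mem_sUnion.mp (hm (t s) hmts)
    obtain ⟨U, hU, hSU⟩ := (hGhat (t s)).1 hS
    obtain ⟨k, hek⟩ : U ∈ Set.range e := by rw [hre]; exact hU.1
    have hkI : k ∈ I (t s) := ⟨hek ▸ hU, by rw [hek, hSU]; exact hS⟩
    have hklow : t s ≤ k := by
      by_contra hlt
      push_neg at hlt
      exact (hek ▸ hU).2 ⟨k, hlt, rfl⟩
    have hkup : k ≤ Mf (t s) := hMf (t s) k hkI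
    refine ⟨k, hklow, by rw [htsucc s]; omega, ?_⟩
    have hAU : A ⊆ U := by rw [← hSU] at hKS; exact hKS
    rw [hek]; exact hAU
  exact block_groupable3 𝒜 hsingA hC he hre ht ht0 H

lemma countable_bcover_groupable3
    (𝒜 : Set (Set X)) (ℬ : Set (Set (Hyper X 𝒜)))
    (hAfin : ∀ F : Set X, F.Finite → F.Nonempty → F ∈ 𝒜)
    (hBfin : ∀ F : Set (Hyper X 𝒜), F.Finite → F.Nonempty → F ∈ ℬ)
    (hBun : ∀ A B : Set (Hyper X 𝒜), A ∈ ℬ → B ∈ ℬ → A ∪ B ≠ Set.univ → A ∪ B ∈ ℬ)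
    (hneB : ∀ B ∈ ℬ, ∀ F : Set (Hyper X 𝒜), F.Finite → B ∪ F ≠ Set.univ)
    (hS1b : ∀ Ks ∈ ℬ, (⋃ K ∈ Ks, (K : Hyper X 𝒜).1) ∈ 𝒜)
    (hS3 : ∀ 𝒰 ∈ ACovers (Hyper X 𝒜) ℬ,
      {V : Set X | IsOpen V ∧ V.Nonempty ∧ V ≠ Set.univ ∧
        ∃ U ∈ 𝒰, {K : Hyper X 𝒜 | K.1 ⊆ V} ⊆ U} ∈ ACovers X 𝒜)
    (hSel : Sfin (ACovers X 𝒜) (groupables (ACovers X 𝒜)))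
    (x₀ : X)
    {G : Set (Set (Hyper X 𝒜))} (hG : G ∈ ACovers (Hyper X 𝒜) ℬ) (hcnt : G.Countable) :
    Groupable (ACovers (Hyper X 𝒜) ℬ) G := by
  classical
  have hsingA : ∀ x : X, ({x} : Set X) ∈ 𝒜 :=
    fun x => hAfin _ (Set.finite_singleton x) ⟨x, rfl⟩
  have hsingB : ∀ K : Hyper X 𝒜, ({K} : Set (Hyper X 𝒜)) ∈ ℬ :=
    fun K => hBfin _ (Set.finite_singleton K) ⟨K, rfl⟩
  have hinf : G.Infinite := cover_infinite3 ℬ hBfin ⟨{x₀}, hsingA x₀⟩ hG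
  obtain ⟨e, he, hre⟩ := exists_enum3 hcnt hinf
  have htail : ∀ m : ℕ, G \ (e '' Set.Iio m) ∈ ACovers (Hyper X 𝒜) ℬ := fun m =>
    tail_cover3 ℬ hBfin hBun hneB hG ((Set.finite_Iio m).image e)
      (by rw [← hre]; exact Set.image_subset_range e _)
  set 𝒲 : ℕ → Set (Set X) := fun m =>
    {V : Set X | IsOpen V ∧ V.Nonempty ∧ V ≠ Set.univ ∧
      ∃ U ∈ G \ (e '' Set.Iio m), {K : Hyper X 𝒜 | K.1 ⊆ V} ⊆ U} with h𝒲def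
  have h𝒲 : ∀ m, 𝒲 m ∈ ACovers X 𝒜 := fun m => hS3 _ (htail m)
  obtain ⟨ℱ, hℱ, hCgrp⟩ := hSel 𝒲 h𝒲
  obtain ⟨hCmem, φ, hfib, hJ⟩ := hCgrp
  set C := ⋃ m, ℱ m with hCdef
  have hwit : ∀ V ∈ C, ∃ k, {K : Hyper X 𝒜 | K.1 ⊆ V} ⊆ e k ∧ ∃ m ≤ k, V ∈ ℱ m := by
    intro V hV
    obtain ⟨m, hm⟩ := Set.mem_iUnion.mp hV
    obtain ⟨-, -, -, U, hU, hbr⟩ := (hℱ m).1 hm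
    obtain ⟨k, hek⟩ : U ∈ Set.range e := by rw [hre]; exact hU.1
    refine ⟨k, by rw [hek]; exact hbr, m, ?_, hm⟩
    by_contra hcon
    push_neg at hcon
    exact hU.2 (hek ▸ ⟨k, hcon, rfl⟩)
  set kV : Set X → ℕ := fun V => if h : V ∈ C then (hwit V h).choose else 0 with hkVdef
  have hkV : ∀ V (h : V ∈ C),
      {K : Hyper X 𝒜 | K.1 ⊆ V} ⊆ e (kV V) ∧ ∃ m ≤ kV V, V ∈ ℱ m := by
    intro V h
    simp only [hkVdef, dif_pos h]
    exact (hwit V h).choose_spec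
  have hLowfin : ∀ tt : ℕ, {V ∈ C | kV V < tt}.Finite := by
    intro tt
    have hsub : {V ∈ C | kV V < tt} ⊆ ⋃ m ∈ Set.Iio tt, ℱ m := by
      rintro V ⟨hVC, hVk⟩
      obtain ⟨-, m, hmk, hVm⟩ := hkV V hVC
      exact Set.mem_biUnion (show m ∈ Set.Iio tt from lt_of_le_of_lt hmk hVk) hVm
    exact ((Set.finite_Iio tt).biUnion fun m _ => (hℱ m).2).subset hsub
  have hΦfin : ∀ tt : ℕ, (φ '' {V ∈ C | kV V < tt}).Finite := fun tt => (hLowfin tt).image φ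
  set cc : ℕ → ℕ := fun tt => (hΦfin tt).toFinset.card with hccdef
  have hlevfin : ∀ j : ℕ, {V ∈ C | φ V ≤ j}.Finite := by
    intro j
    have hsub : {V ∈ C | φ V ≤ j} ⊆ ⋃ i ∈ Set.Iic j, {x ∈ C | φ x = i} := by
      rintro V ⟨hVC, hVj⟩
      exact Set.mem_biUnion (Set.mem_Iic.mpr hVj) ⟨hVC, rfl⟩
    exact ((Set.finite_Iic j).biUnion fun i _ => hfib i).subset hsub
  have hbdd : ∀ j : ℕ, ∃ b, ∀ V ∈ C, φ V ≤ j → kV V ≤ b := by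
    intro j
    rcases ((hlevfin j).image kV).bddAbove with ⟨b, hb⟩
    exact ⟨b, fun V hV hj => hb ⟨V, ⟨hV, hj⟩, rfl⟩⟩
  choose hfun hhfun using hbdd
  set t : ℕ → ℕ := fun s => Nat.rec 0 (fun s ts => max (ts + 1) (hfun (s + cc ts) + 1)) s
    with htdef
  have ht0 : t 0 = 0 := rfl
  have htsucc : ∀ s, t (s + 1) = max (t s + 1) (hfun (s + cc (t s)) + 1) := fun s => rfl
  have ht : StrictMono t := strictMono_nat_of_lt_succ fun s => by rw [htsucc s]; omega
  have hSA : ∀ A ∈ 𝒜, ∃ jB, ∀ j ≥ jB, ∃ V ∈ C, φ V = j ∧ A ⊆ V := by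
    intro A hA
    by_contra hcon
    push_neg at hcon
    set T : Set ℕ := {j | ∀ V ∈ C, φ V = j → ¬A ⊆ V} with hTdef
    have hTinf : T.Infinite := by
      by_contra hTfin
      rw [Set.not_infinite] at hTfin
      rcases hTfin.bddAbove with ⟨b, hb⟩
      obtain ⟨j, hj1, hj2⟩ := hcon (b + 1)
      have hjT : j ∈ T := by
        intro V hVC hVj
        exact hj2 V hVC hVj
      have := hb hjT
      omega
    obtain ⟨V, hV, hAV⟩ := (hJ T hTinf).2 A hA
    exact hV.2 V hV.1 rfl hAV
  have H : ∀ B ∈ ℬ, ∃ s₀, ∀ s ≥ s₀, ∃ k, t s ≤ k ∧ k < t (s + 1) ∧ B ⊆ e k := by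
    intro B hB
    obtain ⟨jB, hjB⟩ := hSA _ (hS1b B hB)
    refine ⟨jB, fun s hs => ?_⟩
    obtain ⟨j, hj1, hj2, hj3⟩ :
        ∃ j, jB ≤ j ∧ j ≤ s + cc (t s) ∧ j ∉ φ '' {V ∈ C | kV V < t s} := by
      by_contra hcon
      push_neg at hcon
      have hsub : Finset.Icc jB (s + cc (t s)) ⊆ (hΦfin (t s)).toFinset := by
        intro j hj
        rw [Finset.mem_Icc] at hj
        rw [Set.Finite.mem_toFinset]
        exact hcon j hj.1 hj.2
      have hcard := Finset.card_le_card hsub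
      rw [Nat.card_Icc] at hcard
      have hcc : (hΦfin (t s)).toFinset.card = cc (t s) := rfl
      omega
    obtain ⟨V, hVC, hVj, hAV⟩ := hjB j hj1
    have hklow : t s ≤ kV V := by
      by_contra hc
      push_neg at hc
      exact hj3 ⟨V, ⟨hVC, hc⟩, hVj⟩
    have hkup : kV V ≤ hfun (s + cc (t s)) := hhfun (s + cc (t s)) V hVC (by omega)
    refine ⟨kV V, hklow, by rw [htsucc s]; omega, ?_⟩
    intro K hK
    refine (hkV V hVC).1 ?_
    exact Set.Subset.trans (Set.subset_biUnion_of_mem hK) hAV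
  exact block_groupable3 ℬ hsingB hG he hre ht ht0 H

end MainAux


theorem statement3 {X : Type u} [TopologicalSpace X] [T2Space X]
    (𝒜 : Set (Set X)) (h𝒜 : IdealOfClosedSets X 𝒜) (h𝒜c : ∀ A ∈ 𝒜, IsCompact A)
    (ℬ : Set (Set (Hyper X 𝒜))) (hℬ : IdealOfClosedSets (Hyper X 𝒜) ℬ)
    (hℬc : ∀ B ∈ ℬ, IsCompact B)
    (hS1a : ∀ K₀ ∈ 𝒜, {K : Hyper X 𝒜 | K.1 ⊆ K₀} ∈ ℬ)
    (hS1b : ∀ Ks ∈ ℬ, (⋃ K ∈ Ks, (K : Hyper X 𝒜).1) ∈ 𝒜)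
    (hS2 : ∀ 𝒰 ∈ ACovers X 𝒜,
      ((fun U => {K : Hyper X 𝒜 | K.1 ⊆ U}) '' 𝒰) ∈ ACovers (Hyper X 𝒜) ℬ)
    (hS3 : ∀ 𝒰 ∈ ACovers (Hyper X 𝒜) ℬ,
      {V : Set X | IsOpen V ∧ V.Nonempty ∧ V ≠ Set.univ ∧
        ∃ U ∈ 𝒰, {K : Hyper X 𝒜 | K.1 ⊆ V} ⊆ U} ∈ ACovers X 𝒜)
    (hS4a : Sfin (ACovers X 𝒜) (groupables (ACovers X 𝒜)) → HurewiczProp X)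
    (hS4b : Sfin (ACovers (Hyper X 𝒜) ℬ) (groupables (ACovers (Hyper X 𝒜) ℬ)) →
      HurewiczProp (Hyper X 𝒜))
    (hS5a : MengerProp (Hyper X 𝒜) ↔ Sfin (ACovers (Hyper X 𝒜) ℬ) (ACovers (Hyper X 𝒜) ℬ))
    (hS5b : Sfin (ACovers (Hyper X 𝒜) ℬ) (ACovers (Hyper X 𝒜) ℬ) ↔
      Sfin (ACovers X 𝒜) (ACovers X 𝒜)) :
    List.TFAE
      [HurewiczProp (Hyper X 𝒜),
       Sfin (ACovers (Hyper X 𝒜) ℬ) (groupables (ACovers (Hyper X 𝒜) ℬ)),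
       Sfin (ACovers X 𝒜) (groupables (ACovers X 𝒜)),
       Sfin (ACovers X 𝒜) (ACovers X 𝒜) ∧
         groupables (ACovers X 𝒜) = {𝒰 | 𝒰 ∈ ACovers X 𝒜 ∧ 𝒰.Countable}] := by
  classical
  rcases isEmpty_or_nonempty X with hX | hX
  · -- `X` is empty: all four statements hold trivially.
    have hAe : ∀ A ∈ 𝒜, False := fun A hA => by
      obtain ⟨x, -⟩ := (h𝒜.1 A hA).2.1
      exact hX.elim x
    have hYe : IsEmpty (Hyper X 𝒜) := ⟨fun K => hAe K.1 K.2⟩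
    have hBe : ∀ B ∈ ℬ, False := fun B hB => by
      obtain ⟨K, -⟩ := (hℬ.1 B hB).2.1
      exact hYe.elim K
    have hOXX : (∅ : Set (Set X)) ∈ ACovers X 𝒜 := by
      refine ⟨⟨fun U hU => absurd hU (Set.notMem_empty U), ?_⟩, fun A hA => (hAe A hA).elim⟩
      rw [Set.sUnion_empty]
      exact (Set.univ_eq_empty_iff.mpr hX).symm
    have hOXY : (∅ : Set (Set (Hyper X 𝒜))) ∈ ACovers (Hyper X 𝒜) ℬ := by
      refine ⟨⟨fun U hU => absurd hU (Set.notMem_empty U), ?_⟩, fun B hB => (hBe B hB).elim⟩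
      rw [Set.sUnion_empty]
      exact (Set.univ_eq_empty_iff.mpr hYe).symm
    have hgrpX : Groupable (ACovers X 𝒜) (∅ : Set (Set X)) := by
      refine ⟨fun _ => 0, fun n => by simp, fun J hJ => ?_⟩
      have hemp : {x ∈ (∅ : Set (Set X)) | (fun _ => (0 : ℕ)) x ∈ J} = ∅ := by ext; simp
      rw [hemp]
      exact hOXX
    have hgrpY : Groupable (ACovers (Hyper X 𝒜) ℬ) (∅ : Set (Set (Hyper X 𝒜))) := by
      refine ⟨fun _ => 0, fun n => by simp, fun J hJ => ?_⟩
      have hemp : {x ∈ (∅ : Set (Set (Hyper X 𝒜))) | (fun _ => (0 : ℕ)) x ∈ J} = ∅ := by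
        ext; simp
      rw [hemp]
      exact hOXY
    have hP1 : HurewiczProp (Hyper X 𝒜) := fun 𝒰 h𝒰 =>
      ⟨fun _ => ∅, fun n => ⟨Set.empty_subset _, Set.finite_empty⟩, fun K => (hYe.elim K)⟩
    have hP2 : Sfin (ACovers (Hyper X 𝒜) ℬ) (groupables (ACovers (Hyper X 𝒜) ℬ)) := by
      intro 𝒰 h𝒰
      refine ⟨fun _ => ∅, fun n => ⟨Set.empty_subset _, Set.finite_empty⟩, ?_⟩
      rw [Set.iUnion_empty]
      exact ⟨hOXY, hgrpY⟩
    have hP3 : Sfin (ACovers X 𝒜) (groupables (ACovers X 𝒜)) := by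
      intro 𝒰 h𝒰
      refine ⟨fun _ => ∅, fun n => ⟨Set.empty_subset _, Set.finite_empty⟩, ?_⟩
      rw [Set.iUnion_empty]
      exact ⟨hOXX, hgrpX⟩
    have hP4 : Sfin (ACovers X 𝒜) (ACovers X 𝒜) ∧
        groupables (ACovers X 𝒜) = {𝒰 | 𝒰 ∈ ACovers X 𝒜 ∧ 𝒰.Countable} := by
      constructor
      · intro 𝒰 h𝒰
        refine ⟨fun _ => ∅, fun n => ⟨Set.empty_subset _, Set.finite_empty⟩, ?_⟩
        rw [Set.iUnion_empty]
        exact hOXX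
      · ext C
        constructor
        · rintro ⟨hCm, hg⟩
          exact ⟨hCm, grp_countable3 hg⟩
        · rintro ⟨hCm, -⟩
          have hCe : C = ∅ := by
            ext U
            simp only [Set.mem_empty_iff_false, iff_false]
            intro hU
            obtain ⟨x, -⟩ := (hCm.1.1 U hU).2.1
            exact hX.elim x
          subst hCe
          exact ⟨hCm, hgrpX⟩
    intro p hp q hq
    simp only [List.mem_cons, List.not_mem_nil, or_false] at hp hq
    rcases hp with rfl | rfl | rfl | rfl <;> rcases hq with rfl | rfl | rfl | rfl <;>
      exact iff_of_true (by assumption) (by assumption)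
  · -- `X` is nonempty.
    obtain ⟨x₀⟩ := hX
    have hsingA : ∀ x : X, ({x} : Set X) ∈ 𝒜 :=
      fun x => h𝒜.2.1 _ (Set.finite_singleton x) ⟨x, rfl⟩
    have hneA : ∀ A ∈ 𝒜, ∀ F : Set X, F.Finite → A ∪ F ≠ Set.univ := by
      intro A hA F hF h
      have hcsub : Aᶜ ⊆ F := fun x hx =>
        (show x ∈ A ∪ F from h ▸ Set.mem_univ x).resolve_left hx
      have hcA : Aᶜ ∈ 𝒜 :=
        h𝒜.2.1 _ (hF.subset hcsub) (Set.nonempty_compl.mpr (h𝒜.1 A hA).2.2)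
      have hpair : ({⟨A, hA⟩, ⟨Aᶜ, hcA⟩} : Set (Hyper X 𝒜)) ∈ ℬ :=
        hℬ.2.1 _ ((Set.finite_singleton _).insert _) ⟨_, Set.mem_insert _ _⟩
      have huniv := hS1b _ hpair
      erw [Set.biUnion_pair] at huniv
      simp only [Set.union_compl_self] at huniv
      exact (h𝒜.1 _ huniv).2.2 rfl
    have hneB : ∀ B ∈ ℬ, ∀ F : Set (Hyper X 𝒜), F.Finite → B ∪ F ≠ Set.univ := by
      intro B hB F hF h
      have hcsub : Bᶜ ⊆ F := fun K hK =>
        (show K ∈ B ∪ F from h ▸ Set.mem_univ K).resolve_left hK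
      have hcB : Bᶜ ∈ ℬ :=
        hℬ.2.1 _ (hF.subset hcsub) (Set.nonempty_compl.mpr (hℬ.1 B hB).2.2)
      have hA1 := hS1b B hB
      have hA2 := hS1b _ hcB
      have hpair : ({⟨_, hA1⟩, ⟨_, hA2⟩} : Set (Hyper X 𝒜)) ∈ ℬ :=
        hℬ.2.1 _ ((Set.finite_singleton _).insert _) ⟨_, Set.mem_insert _ _⟩
      have huniv := hS1b _ hpair
      erw [Set.biUnion_pair] at huniv
      have hequ : (⋃ K ∈ B, (K : Hyper X 𝒜).1) ∪ (⋃ K ∈ Bᶜ, (K : Hyper X 𝒜).1) =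
          Set.univ := by
        apply Set.eq_univ_of_forall
        intro x
        by_cases hx : (⟨{x}, hsingA x⟩ : Hyper X 𝒜) ∈ B
        · exact Set.mem_union_left _ (Set.mem_biUnion hx rfl)
        · exact Set.mem_union_right _ (Set.mem_biUnion hx rfl)
      rw [hequ] at huniv
      exact (h𝒜.1 _ huniv).2.2 rfl
    tfae_have 2 → 1 := hS4b
    tfae_have 1 → 4 := by
      intro h1
      have hSB : Sfin (ACovers (Hyper X 𝒜) ℬ) (ACovers (Hyper X 𝒜) ℬ) :=
        hS5a.mp (menger_of_hurewicz3 h1)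
      refine ⟨hS5b.mp hSB, ?_⟩
      ext C
      constructor
      · rintro ⟨hCm, hg⟩
        exact ⟨hCm, grp_countable3 hg⟩
      · rintro ⟨hCm, hcnt⟩
        exact ⟨hCm, countable_acover_groupable3 𝒜 ℬ h𝒜.2.1 h𝒜.2.2.1 hneA hS2 h1 x₀ hCm hcnt⟩
    tfae_have 4 → 3 := by
      rintro ⟨hsel, heq⟩ 𝒰 h𝒰
      obtain ⟨ℱ, hℱ, hun⟩ := hsel 𝒰 h𝒰
      refine ⟨ℱ, hℱ, ?_⟩
      rw [heq]
      exact ⟨hun, Set.countable_iUnion fun n => (hℱ n).2.countable⟩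
    tfae_have 3 → 2 := by
      intro h3
      have hSA : Sfin (ACovers X 𝒜) (ACovers X 𝒜) := by
        intro 𝒰 h𝒰
        obtain ⟨ℱ, hℱ, hm⟩ := h3 𝒰 h𝒰
        exact ⟨ℱ, hℱ, hm.1⟩
      have hSB := hS5b.mpr hSA
      intro 𝒰 h𝒰
      obtain ⟨𝒢, h𝒢, hGmem⟩ := hSB 𝒰 h𝒰
      refine ⟨𝒢, h𝒢, hGmem, ?_⟩
      exact countable_bcover_groupable3 𝒜 ℬ h𝒜.2.1 hℬ.2.1 hℬ.2.2.1 hneB hS1b hS3 h3 x₀ hGmem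
        (Set.countable_iUnion fun n => (h𝒢 n).2.countable)
    tfae_finish
end

section
/- Let X be a Hausdorff space, let 𝒜 be an ideal of closed sets of X consisting of compact sets, let 𝔸(X) denote 𝒜 regarded as a subspace of 𝕂(X), let ℬ be an ideal of closed sets of 𝔸(X) consisting of compact sets, and let □ ∈ {1, fin}. For U open in X write [U] = {K ∈ 𝔸(X) : K ⊆ U}. Assume hypotheses (S1)–(S5): (S1) for every K₀ ∈ 𝒜 the set {K ∈ 𝔸(X) : K ⊆ K₀} belongs to ℬ, and for every 𝐊 ∈ ℬ the union ⋃𝐊 belongs to 𝒜; (S2) for every 𝒜-cover 𝒰 of X, {[U] : U ∈ 𝒰} is a ℬ-cover of 𝔸(X); (S3) for every ℬ-cover 𝒰 of 𝔸(X), the family {V : V a nonempty proper open subset of X with [V] ⊆ U for some U ∈ 𝒰} is an 𝒜-cover of X; (S4) if X satisfies S_fin(𝒪_X(𝒜), 𝒪_X(𝒜)^gp) then X has the Hurewicz property, and likewise for 𝔸(X) with ℬ; (S5) 𝔸(X) is Menger iff 𝔸(X) satisfies S_fin(𝒪_{𝔸(X)}(ℬ), 𝒪_{𝔸(X)}(ℬ))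 iff X satisfies S_fin(𝒪_X(𝒜), 𝒪_X(𝒜)). Assume moreover that One has a winning predetermined strategy in G_□(𝒪_X(𝒜), 𝒪_X(𝒜)) if and only if One has a winning strategy in G_□(𝒪_X(𝒜), 𝒪_X(𝒜)). Then One has a winning predetermined strategy in G_□(𝒪_X(𝒜), 𝒪_X(𝒜)^gp) if and only if One has a winning strategy in G_□(𝒪_X(𝒜), 𝒪_X(𝒜)^gp). -/
open Set TopologicalSpace

universe u

/-- Within an 𝒜-cover context, any family of nonempty proper open sets containing an
𝒜-cover is itself an 𝒜-cover. -/
lemma aux_superset_ACover {X : Type u} [TopologicalSpace X] {𝒜 : Set (Set X)}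
    {W W' : Set (Set X)} (hW : W ∈ ACovers X 𝒜) (hsub : W ⊆ W')
    (hW' : ∀ U ∈ W', IsOpen U ∧ U.Nonempty ∧ U ≠ Set.univ) : W' ∈ ACovers X 𝒜 := by
  obtain ⟨⟨_, hcov⟩, hA⟩ := hW
  refine ⟨⟨hW', ?_⟩, ?_⟩
  · apply Set.eq_univ_of_univ_subset
    rw [← hcov]
    exact Set.sUnion_mono hsub
  · intro A hAmem
    obtain ⟨U, hU, hAU⟩ := hA A hAmem
    exact ⟨U, hsub hU, hAU⟩

/-- Key combinatorial lemma: if `S_fin(𝒪(𝒜), 𝒪(𝒜)^gp)` holds, then every countable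
𝒜-cover is groupable. -/
lemma aux_countable_groupable {X : Type u} [TopologicalSpace X] {𝒜 : Set (Set X)}
    (hS : Sfin (ACovers X 𝒜) (groupables (ACovers X 𝒜)))
    {R : Set (Set X)} (hR : R ∈ ACovers X 𝒜) (hc : R.Countable) :
    R ∈ groupables (ACovers X 𝒜) := by
  obtain ⟨ℱ, hℱ, hgp⟩ := hS (fun _ => R) (fun _ => hR)
  set V : Set (Set X) := ⋃ n, ℱ n with hVdef
  have hVR : V ⊆ R := Set.iUnion_subset fun n => (hℱ n).1
  obtain ⟨hVcov, φ₀, hfib, htail⟩ := hgp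
  obtain ⟨e, he⟩ : ∃ e : Set X → ℕ, Set.InjOn e R := by
    rcases R.eq_empty_or_nonempty with h | h
    · exact ⟨fun _ => 0, by simp [h]⟩
    · obtain ⟨f, hf⟩ := Set.countable_iff_exists_injOn.mp hc
      exact ⟨f, hf⟩
  classical
  refine ⟨hR, fun x => if x ∈ V then φ₀ x else e x, ?_, ?_⟩
  · intro n
    have h1 : {x ∈ V | φ₀ x = n}.Finite := hfib n
    have h2 : {x | x ∈ R ∧ x ∉ V ∧ e x = n}.Finite := by
      apply Set.Subsingleton.finite
      rintro a ⟨haR, -, hae⟩ b ⟨hbR, -, hbe⟩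
      exact he haR hbR (hae.trans hbe.symm)
    refine ((h1.union h2).subset ?_)
    rintro x ⟨hxR, hx⟩
    by_cases hxV : x ∈ V
    · left; refine ⟨hxV, ?_⟩; simpa [hxV] using hx
    · right; refine ⟨hxR, hxV, ?_⟩; simpa [hxV] using hx
  · intro J hJ
    have h0 : {x ∈ V | φ₀ x ∈ J} ∈ ACovers X 𝒜 := htail J hJ
    refine aux_superset_ACover h0 ?_ ?_
    · rintro x ⟨hxV, hxJ⟩
      exact ⟨hVR hxV, by simpa [hxV] using hxJ⟩
    · rintro U ⟨hUR, -⟩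
      exact hR.1.1 U hUR

theorem statement4 {X : Type u} [TopologicalSpace X] [T2Space X]
    (𝒜 : Set (Set X)) (h𝒜 : IdealOfClosedSets X 𝒜) (h𝒜c : ∀ A ∈ 𝒜, IsCompact A)
    (ℬ : Set (Set (Hyper X 𝒜))) (hℬ : IdealOfClosedSets (Hyper X 𝒜) ℬ)
    (hℬc : ∀ B ∈ ℬ, IsCompact B)
    (hS1a : ∀ K₀ ∈ 𝒜, {K : Hyper X 𝒜 | K.1 ⊆ K₀} ∈ ℬ)
    (hS1b : ∀ Ks ∈ ℬ, (⋃ K ∈ Ks, (K : Hyper X 𝒜).1) ∈ 𝒜)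
    (hS2 : ∀ 𝒰 ∈ ACovers X 𝒜,
      ((fun U => {K : Hyper X 𝒜 | K.1 ⊆ U}) '' 𝒰) ∈ ACovers (Hyper X 𝒜) ℬ)
    (hS3 : ∀ 𝒰 ∈ ACovers (Hyper X 𝒜) ℬ,
      {V : Set X | IsOpen V ∧ V.Nonempty ∧ V ≠ Set.univ ∧
        ∃ U ∈ 𝒰, {K : Hyper X 𝒜 | K.1 ⊆ V} ⊆ U} ∈ ACovers X 𝒜)
    (hS4a : Sfin (ACovers X 𝒜) (groupables (ACovers X 𝒜)) → HurewiczProp X)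
    (hS4b : Sfin (ACovers (Hyper X 𝒜) ℬ) (groupables (ACovers (Hyper X 𝒜) ℬ)) →
      HurewiczProp (Hyper X 𝒜))
    (hS5a : MengerProp (Hyper X 𝒜) ↔ Sfin (ACovers (Hyper X 𝒜) ℬ) (ACovers (Hyper X 𝒜) ℬ))
    (hS5b : Sfin (ACovers (Hyper X 𝒜) ℬ) (ACovers (Hyper X 𝒜) ℬ) ↔
      Sfin (ACovers X 𝒜) (ACovers X 𝒜)) :
    ((OneWinsPreGone (ACovers X 𝒜) (ACovers X 𝒜) ↔ OneWinsGone (ACovers X 𝒜) (ACovers X 𝒜)) →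
      (OneWinsPreGone (ACovers X 𝒜) (groupables (ACovers X 𝒜)) ↔
        OneWinsGone (ACovers X 𝒜) (groupables (ACovers X 𝒜)))) ∧
    ((OneWinsPreGfin (ACovers X 𝒜) (ACovers X 𝒜) ↔ OneWinsGfin (ACovers X 𝒜) (ACovers X 𝒜)) →
      (OneWinsPreGfin (ACovers X 𝒜) (groupables (ACovers X 𝒜)) ↔
        OneWinsGfin (ACovers X 𝒜) (groupables (ACovers X 𝒜)))) := by
  clear h𝒜 h𝒜c hℬ hℬc hS1a hS1b hS2 hS3 hS4a hS4b hS5a hS5b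
  set 𝒞 := ACovers X 𝒜 with h𝒞
  constructor
  · -- G_1 case
    intro h
    constructor
    · rintro ⟨σ, hσ, hwin⟩
      refine ⟨fun s => σ s.length, fun s => hσ _, fun f hf => hwin f fun n => ?_⟩
      simpa using hf n
    · intro hw
      by_cases hS : Sone 𝒞 (groupables 𝒞)
      · -- every countable 𝒜-cover is groupable
        have hSfin : Sfin 𝒞 (groupables 𝒞) := by
          intro 𝒰 h𝒰
          obtain ⟨f, hf, hfr⟩ := hS 𝒰 h𝒰
          refine ⟨fun n => {f n}, fun n => ⟨by simpa using hf n, Set.finite_singleton _⟩, ?_⟩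
          have : (⋃ n, ({f n} : Set (Set X))) = Set.range f := by
            ext x; simp [Set.mem_range, eq_comm]
          rwa [this]
        have hplain : OneWinsGone 𝒞 𝒞 := by
          obtain ⟨σ, hσ, hwin⟩ := hw
          refine ⟨σ, hσ, fun f hf hmem => ?_⟩
          exact hwin f hf (aux_countable_groupable hSfin hmem (Set.countable_range f))
        obtain ⟨σ, hσ, hwin⟩ := h.mpr hplain
        exact ⟨σ, hσ, fun f hf hm => hwin f hf hm.1⟩
      · rw [Sone] at hS
        push_neg at hS
        obtain ⟨𝒰, h𝒰, hno⟩ := hS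
        exact ⟨𝒰, h𝒰, hno⟩
  · -- G_fin case
    intro h
    constructor
    · rintro ⟨σ, hσ, hwin⟩
      refine ⟨fun s => σ s.length, fun s => hσ _, fun F hF => hwin F fun n => ?_⟩
      obtain ⟨h1, h2⟩ := hF n
      exact ⟨h1, by simpa using h2⟩
    · intro hw
      by_cases hS : Sfin 𝒞 (groupables 𝒞)
      · have hplain : OneWinsGfin 𝒞 𝒞 := by
          obtain ⟨σ, hσ, hwin⟩ := hw
          refine ⟨σ, hσ, fun F hF hmem => ?_⟩
          have hcnt : (⋃ n, F n).Countable :=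
            Set.countable_iUnion fun n => (hF n).1.countable
          exact hwin F hF (aux_countable_groupable hS hmem hcnt)
        obtain ⟨σ, hσ, hwin⟩ := h.mpr hplain
        exact ⟨σ, hσ, fun F hF hm => hwin F hF hm.1⟩
      · rw [Sfin] at hS
        push_neg at hS
        obtain ⟨𝒰, h𝒰, hno⟩ := hS
        exact ⟨𝒰, h𝒰, fun F hF => hno F fun n => ⟨(hF n).2, (hF n).1⟩⟩
end

section
/- Let X be a non-compact Hausdorff space. If X satisfies S_fin(𝒦_X, 𝒦_X^gp), then X has the Hurewicz property. -/
open Set TopologicalSpace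

universe u

theorem statement6 {X : Type u} [TopologicalSpace X] [T2Space X] (hX : ¬ CompactSpace X)
    (h : Sfin (KCovers X) (groupables (KCovers X))) : HurewiczProp X := by
  classical
  intro 𝒰 h𝒰
  set B : Set ℕ := {n | ∃ F : Set (Set X), F.Finite ∧ F ⊆ 𝒰 n ∧ ⋃₀ F = Set.univ} with hBdef
  have scv : ∀ n : ℕ, ∃ F : Set (Set X),
      (F.Finite ∧ F ⊆ 𝒰 n) ∧ (n ∈ B → ⋃₀ F = Set.univ) := by
    intro n
    by_cases hn : n ∈ B
    · obtain ⟨F, h1, h2, h3⟩ := hn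
      exact ⟨F, ⟨h1, h2⟩, fun _ => h3⟩
    · exact ⟨∅, ⟨Set.finite_empty, Set.empty_subset _⟩, fun hh => absurd hh hn⟩
  choose sc hsc hscB using scv
  by_cases hBinf : {n : ℕ | n ∉ B}.Infinite
  · -- main case: infinitely many covers without finite subcover
    set p : ℕ → Prop := fun n => n ∉ B with hpdef
    have hp : (setOf p).Infinite := hBinf
    set e : ℕ → ℕ := Nat.nth p with hedef
    have he_mem : ∀ i, e i ∉ B := fun i => Nat.nth_mem_of_infinite hp i
    have he_mono : StrictMono e := Nat.nth_strictMono hp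
    -- the auxiliary k-covers
    set 𝒲 : ℕ → Set (Set X) := fun k =>
      {V | V.Nonempty ∧ ∃ F : ℕ → Set (Set X),
        (∀ i ≤ k, (F i).Finite ∧ F i ⊆ 𝒰 (e i)) ∧ V = ⋂ i ∈ Finset.Iic k, ⋃₀ F i} with h𝒲def
    have hcpt : ∀ k, ∀ K : Set X, IsCompact K → K.Nonempty → ∃ V ∈ 𝒲 k, K ⊆ V := by
      intro k K hK hKne
      have hex : ∀ i : ℕ, ∃ F : Set (Set X), F.Finite ∧ F ⊆ 𝒰 (e i) ∧ K ⊆ ⋃₀ F := by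
        intro i
        have hcov : K ⊆ ⋃ u : (𝒰 (e i) : Set (Set X)), (u : Set X) := by
          rw [← Set.sUnion_eq_iUnion, (h𝒰 (e i)).2]
          exact Set.subset_univ K
        obtain ⟨t, ht⟩ := hK.elim_finite_subcover
          (fun u : (𝒰 (e i) : Set (Set X)) => (u : Set X))
          (fun u => ((h𝒰 (e i)).1 u u.2).1) hcov
        refine ⟨Subtype.val '' (t : Set (𝒰 (e i))), (Set.Finite.image Subtype.val t.finite_toSet), ?_, ?_⟩
        · rintro U ⟨u, _, rfl⟩
          exact u.2
        · intro x hx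
          obtain ⟨u, hu, hxu⟩ := Set.mem_iUnion₂.mp (ht hx)
          exact ⟨u, ⟨u, hu, rfl⟩, hxu⟩
      choose F hF1 hF2 hF3 using hex
      have hKV : K ⊆ ⋂ i ∈ Finset.Iic k, ⋃₀ F i :=
        Set.subset_iInter₂ fun i _ => hF3 i
      exact ⟨_, ⟨hKne.mono hKV, F, fun i _ => ⟨hF1 i, hF2 i⟩, rfl⟩, hKV⟩
    have hWopen : ∀ k, ∀ V ∈ 𝒲 k, IsOpen V ∧ V.Nonempty ∧ V ≠ Set.univ := by
      intro k V hV
      obtain ⟨hVne, F, hF, rfl⟩ := hV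
      refine ⟨?_, hVne, ?_⟩
      · exact isOpen_biInter_finset fun i hi =>
          isOpen_sUnion fun U hU =>
            ((h𝒰 (e i)).1 U ((hF i (Finset.mem_Iic.mp hi)).2 hU)).1
      · intro hEq
        apply he_mem 0
        refine ⟨F 0, (hF 0 (Nat.zero_le k)).1, (hF 0 (Nat.zero_le k)).2, ?_⟩
        have hsub : (⋂ i ∈ Finset.Iic k, ⋃₀ F i) ⊆ ⋃₀ F 0 :=
          Set.biInter_subset_of_mem (Finset.mem_Iic.mpr (Nat.zero_le k))
        rw [hEq] at hsub
        exact Set.eq_univ_of_univ_subset hsub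
    have hWK : ∀ k, 𝒲 k ∈ KCovers X := by
      intro k
      refine ⟨⟨hWopen k, ?_⟩, fun K hK hKne => hcpt k K hK hKne⟩
      apply Set.eq_univ_of_forall
      intro x
      obtain ⟨V, hV, hxV⟩ := hcpt k {x} isCompact_singleton (Set.singleton_nonempty x)
      exact ⟨V, hV, hxV rfl⟩
    obtain ⟨𝒢, h𝒢, hCgp⟩ := h 𝒲 hWK
    obtain ⟨hCK, φ, hφfin, hφJ⟩ := hCgp
    set C : Set (Set X) := ⋃ n, 𝒢 n with hCdef
    -- round of each selected set
    have hρex : ∀ V : Set X, ∃ k, V ∈ C → V ∈ 𝒢 k := by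
      intro V
      by_cases hV : V ∈ C
      · obtain ⟨k, hk⟩ := Set.mem_iUnion.mp hV
        exact ⟨k, fun _ => hk⟩
      · exact ⟨0, fun hh => absurd hh hV⟩
    choose ρ hρ using hρex
    -- the witnessing families for each selected set
    have hdatex : ∀ V : Set X, ∃ F : ℕ → Set (Set X), V ∈ C →
        ∀ i ≤ ρ V, (F i).Finite ∧ F i ⊆ 𝒰 (e i) ∧ V ⊆ ⋃₀ F i := by
      intro V
      by_cases hV : V ∈ C
      · obtain ⟨hVne, F, hF, hVeq⟩ := (h𝒢 (ρ V)).1 (hρ V hV)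
        refine ⟨F, fun _ i hi => ⟨(hF i hi).1, (hF i hi).2, ?_⟩⟩
        rw [hVeq]
        exact Set.biInter_subset_of_mem (Finset.mem_Iic.mpr hi)
      · exact ⟨fun _ => ∅, fun hh => absurd hh hV⟩
    choose Fd hFd using hdatex
    -- sets selected at early rounds form a finite set
    have hTfin : ∀ i : ℕ, {V | V ∈ C ∧ ρ V < i}.Finite := by
      intro i
      apply Set.Finite.subset
        (Set.Finite.biUnion (Finset.range i).finite_toSet fun k _ => (h𝒢 k).2)
      rintro V ⟨hVC, hVlt⟩
      exact Set.mem_biUnion (Finset.mem_coe.mpr (Finset.mem_range.mpr hVlt)) (hρ V hVC)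
    -- choose a group index for each round
    have hmex : ∀ i : ℕ, ∃ mi : ℕ, i ≤ mi ∧ ∀ V, V ∈ C → φ V = mi → i ≤ ρ V := by
      intro i
      obtain ⟨b, hb⟩ := ((hTfin i).image φ).bddAbove
      refine ⟨max i (b + 1), le_max_left _ _, ?_⟩
      intro V hVC hφV
      by_contra hlt
      push_neg at hlt
      have h1 : φ V ≤ b := hb ⟨V, ⟨hVC, hlt⟩, rfl⟩
      have h2 : b + 1 ≤ φ V := hφV ▸ le_max_right i (b + 1)
      omega
    choose m hm1 hm2 using hmex
    -- every point lies in a member of group mm for all large mm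
    have hgrp : ∀ x : X, ∃ m0 : ℕ, ∀ mm ≥ m0, ∃ V, V ∈ C ∧ φ V = mm ∧ x ∈ V := by
      intro x
      set J : Set ℕ := {mm | ¬ ∃ V, V ∈ C ∧ φ V = mm ∧ x ∈ V} with hJdef
      have hJfin : J.Finite := by
        by_contra hinf
        have hJK := hφJ J hinf
        have hcov : (⋃₀ {V ∈ C | φ V ∈ J}) = Set.univ := hJK.1.2
        have hx : x ∈ ⋃₀ {V ∈ C | φ V ∈ J} := hcov ▸ Set.mem_univ x
        obtain ⟨V, ⟨hVC, hVJ⟩, hxV⟩ := hx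
        exact hVJ ⟨V, hVC, rfl, hxV⟩
      obtain ⟨b, hb⟩ := hJfin.bddAbove
      refine ⟨b + 1, fun mm hmm => ?_⟩
      by_contra hno
      have : mm ≤ b := hb hno
      omega
    -- define the final selection
    set gsel : ℕ → Set (Set X) := fun i => {V ∈ C | φ V = m i} with hgseldef
    set ℱ : ℕ → Set (Set X) := fun n =>
      if n ∈ B then sc n else ⋃ V ∈ gsel (Nat.count p n), Fd V (Nat.count p n) with hℱdef
    refine ⟨ℱ, ?_, ?_⟩
    · intro n
      by_cases hn : n ∈ B
      · simp only [hℱdef, if_pos hn]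
        exact ⟨(hsc n).2, (hsc n).1⟩
      · simp only [hℱdef, if_neg hn]
        set i := Nat.count p n with hidef
        have hei : e i = n := Nat.nth_count hn
        constructor
        · intro U hU
          obtain ⟨V, hVg, hUV⟩ := Set.mem_iUnion₂.mp hU
          have hVC : V ∈ C := hVg.1
          have hiρ : i ≤ ρ V := hm2 i V hVC hVg.2
          have := (hFd V hVC i hiρ).2.1 hUV
          rwa [hei] at this
        · apply Set.Finite.biUnion (hφfin (m i))
          intro V hVg
          exact (hFd V hVg.1 i (hm2 i V hVg.1 hVg.2)).1
    · intro x
      obtain ⟨m0, hm0⟩ := hgrp x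
      refine ⟨e m0, ?_⟩
      intro n hn
      by_cases hnB : n ∈ B
      · have : x ∈ ⋃₀ sc n := (hscB n hnB) ▸ Set.mem_univ x
        simpa only [hℱdef, if_pos hnB] using this
      · set i := Nat.count p n with hidef
        have hei : e i = n := Nat.nth_count hnB
        have him0 : m0 ≤ i := by
          by_contra hlt
          push_neg at hlt
          have : e i < e m0 := he_mono hlt
          omega
        obtain ⟨V, hVC, hφV, hxV⟩ := hm0 (m i) (him0.trans (hm1 i))
        have hiρ : i ≤ ρ V := hm2 i V hVC hφV
        have hxU : x ∈ ⋃₀ Fd V i := (hFd V hVC i hiρ).2.2 hxV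
        obtain ⟨U, hUF, hxUU⟩ := hxU
        refine ⟨U, ?_, hxUU⟩
        simp only [hℱdef, if_neg hnB]
        exact Set.mem_biUnion ⟨hVC, hφV⟩ hUF
  · -- trivial case: all but finitely many covers have a finite subcover
    rw [Set.not_infinite] at hBinf
    refine ⟨sc, fun n => ⟨(hsc n).2, (hsc n).1⟩, ?_⟩
    intro x
    obtain ⟨b, hb⟩ := hBinf.bddAbove
    refine ⟨b + 1, fun n hn => ?_⟩
    have hnB : n ∈ B := by
      by_contra hno
      have : n ≤ b := hb hno
      omega
    exact (hscB n hnB) ▸ Set.mem_univ x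
end
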